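/- arXiv:2001.02797 — 5 statements merged into one kernel-verified Lean document; each statement's English description precedes it below -/
import Mathlib

section
/- If X ~ Poisson(x) and Y ~ Poisson(y) are Poisson random variables on ℕ, then the total variation distance between their laws is at most 1 - exp(-|x-y|), and hence at most |x-y|. -/
open scoped BigOperators

/-- Probability mass function of the Poisson distribution with parameter `x`. -/
noncomputable def poiPMF (x : ℝ) (k : ℕ) : ℝ := Real.exp (-x) * x ^ k / (Nat.factorial k)

/-- Total variation distance between two laws on ℕ given by their pmfs. -/
noncomputable def tvDist (p q : ℕ → ℝ) : ℝ := (1 / 2) * ∑' k : ℕ, |p k - q k|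

lemma tsum_pow_div_factorial (x : ℝ) : ∑' k : ℕ, x ^ k / (Nat.factorial k) = Real.exp x := by
  rw [Real.exp_eq_exp_ℝ, NormedSpace.exp_eq_tsum_div]

lemma tvDist_comm (p q : ℕ → ℝ) : tvDist p q = tvDist q p := by
  unfold tvDist
  congr 1
  exact tsum_congr fun k => abs_sub_comm _ _

lemma key (x y : ℝ) (hx : 0 ≤ x) (hxy : x ≤ y) :
    tvDist (poiPMF x) (poiPMF y) ≤ 1 - Real.exp (x - y) := by
  have h1 : Real.exp (-y) ≤ Real.exp (-x) := Real.exp_le_exp.2 (by linarith)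
  set g : ℕ → ℝ := fun k =>
    (Real.exp (-x) - Real.exp (-y)) * (x ^ k / (Nat.factorial k)) +
      (Real.exp (-y) * (y ^ k / (Nat.factorial k)) -
        Real.exp (-y) * (x ^ k / (Nat.factorial k))) with hg
  have hs1 : Summable fun k : ℕ => x ^ k / (Nat.factorial k) := Real.summable_pow_div_factorial x
  have hs2 : Summable fun k : ℕ => y ^ k / (Nat.factorial k) := Real.summable_pow_div_factorial y
  have hgs : Summable g := ((hs1.mul_left _).add ((hs2.mul_left _).sub (hs1.mul_left _)))
  have hpt : ∀ k, |poiPMF x k - poiPMF y k| ≤ g k := by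
    intro k
    have h2 : x ^ k ≤ y ^ k := pow_le_pow_left₀ hx hxy k
    have hfk : (0:ℝ) < (Nat.factorial k : ℝ) := by positivity
    have heq : poiPMF x k - poiPMF y k =
        (Real.exp (-x) - Real.exp (-y)) * (x ^ k / (Nat.factorial k)) +
          (Real.exp (-y) * (x ^ k / (Nat.factorial k)) -
            Real.exp (-y) * (y ^ k / (Nat.factorial k))) := by
      unfold poiPMF; ring
    rw [heq]
    have ha : |(Real.exp (-x) - Real.exp (-y)) * (x ^ k / (Nat.factorial k))| =
        (Real.exp (-x) - Real.exp (-y)) * (x ^ k / (Nat.factorial k)) := by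
      apply abs_of_nonneg
      apply mul_nonneg (by linarith)
      positivity
    have hb : |Real.exp (-y) * (x ^ k / (Nat.factorial k)) -
        Real.exp (-y) * (y ^ k / (Nat.factorial k))| =
        Real.exp (-y) * (y ^ k / (Nat.factorial k)) -
          Real.exp (-y) * (x ^ k / (Nat.factorial k)) := by
      rw [abs_sub_comm, abs_of_nonneg]
      apply sub_nonneg.2
      apply mul_le_mul_of_nonneg_left _ (Real.exp_nonneg _)
      gcongr
    calc _ ≤ |(Real.exp (-x) - Real.exp (-y)) * (x ^ k / (Nat.factorial k))| +
          |Real.exp (-y) * (x ^ k / (Nat.factorial k)) -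
            Real.exp (-y) * (y ^ k / (Nat.factorial k))| := abs_add_le _ _
      _ = g k := by rw [ha, hb, hg]
  have hfs : Summable fun k => |poiPMF x k - poiPMF y k| :=
    Summable.of_nonneg_of_le (fun k => abs_nonneg _) hpt hgs
  have htsum : ∑' k, |poiPMF x k - poiPMF y k| ≤ ∑' k, g k := Summable.tsum_le_tsum hpt hfs hgs
  have hgval : ∑' k, g k = 2 - 2 * Real.exp (x - y) := by
    rw [hg, Summable.tsum_add (hs1.mul_left _) ((hs2.mul_left _).sub (hs1.mul_left _)),
      Summable.tsum_sub (hs2.mul_left _) (hs1.mul_left _), tsum_mul_left, tsum_mul_left,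
      tsum_mul_left, tsum_pow_div_factorial, tsum_pow_div_factorial]
    rw [sub_mul, ← Real.exp_add, ← Real.exp_add, ← Real.exp_add,
      show -x + x = (0:ℝ) by ring, show -y + y = (0:ℝ) by ring,
      show -y + x = x - y by ring, Real.exp_zero]
    ring
  unfold tvDist
  rw [hgval] at htsum
  linarith

/-- If X ~ Poisson(x) and Y ~ Poisson(y), then
`ρ_TV(L(X), L(Y)) ≤ 1 - exp (-|x - y|) ≤ |x - y|`. -/
theorem stmt0 (x y : ℝ) (hx : 0 ≤ x) (hy : 0 ≤ y) :
    tvDist (poiPMF x) (poiPMF y) ≤ 1 - Real.exp (-|x - y|) ∧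
    tvDist (poiPMF x) (poiPMF y) ≤ |x - y| := by
  have h1 : tvDist (poiPMF x) (poiPMF y) ≤ 1 - Real.exp (-|x - y|) := by
    rcases le_total x y with h | h
    · have := key x y hx h
      rwa [show -|x - y| = x - y by rw [abs_of_nonpos (by linarith)]; ring]
    · have := key y x hy h
      rw [tvDist_comm]
      rwa [show -|x - y| = y - x by rw [abs_of_nonneg (by linarith)]; ring]
  refine ⟨h1, h1.trans ?_⟩
  have := Real.add_one_le_exp (-|x - y|)
  linarith
end

section
/- Let S = X₁ + ⋯ + Xₙ be a sum of independent Bernoulli random variables with parameters p₁,…,pₙ ∈ (0,1), let x = p₁ + ⋯ + pₙ, and let X ~ Poisson(x). Then ρ_TV(L(S), L(X)) ≤ (1 - e^{-x}) x^{-1} ∑_{i=1}^n p_i² ≤ max_i p_i. -/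
open scoped BigOperators

/-- Probability of an outcome `u` for `n` independent Bernoulli(`p i`) random variables. -/
noncomputable def bernProb {n : ℕ} (p : Fin n → ℝ) (u : Fin n → Bool) : ℝ :=
  ∏ i, if u i then p i else 1 - p i

/-- The value of the sum `S = X₁ + ⋯ + Xₙ` on the outcome `u`. -/
def countOnes {n : ℕ} (u : Fin n → Bool) : ℕ := ∑ i, if u i then 1 else 0

/-- The law of `S = X₁ + ⋯ + Xₙ` (a pmf on ℕ). -/
noncomputable def lawS {n : ℕ} (p : Fin n → ℝ) (k : ℕ) : ℝ :=
  ∑ u : Fin n → Bool, if countOnes u = k then bernProb p u else 0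

noncomputable def expF (x : ℝ) (k : ℕ) : ℝ := ∑ l ∈ Finset.range k, x ^ l / Nat.factorial l

/-- summand in the Stein solution -/
noncomputable def steinD (x : ℝ) (j l : ℕ) : ℝ :=
  ((if l = j then 1 else 0) - poiPMF x j) * x ^ l / Nat.factorial l

/-- Stein solution for h = indicator of {j}. -/
noncomputable def steinF (x : ℝ) (j : ℕ) : ℕ → ℝ
  | 0 => 0
  | (k+1) => (Nat.factorial k / x ^ (k+1)) * ∑ l ∈ Finset.range (k+1), steinD x j l

lemma stein_eq (x : ℝ) (hx : x ≠ 0) (j k : ℕ) :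
    x * steinF x j (k+1) - k * steinF x j k = (if k = j then 1 else 0) - poiPMF x j := by
  cases k with
  | zero =>
      simp [steinF, steinD]
      field_simp
  | succ m =>
      have hfac : (Nat.factorial m : ℝ) ≠ 0 := Nat.cast_ne_zero.2 (Nat.factorial_ne_zero m)
      have hfac2 : (Nat.factorial (m+1) : ℝ) ≠ 0 := Nat.cast_ne_zero.2 (Nat.factorial_ne_zero _)
      have hpow : x ^ (m+1) ≠ 0 := pow_ne_zero _ hx
      have hpow2 : x ^ (m+2) ≠ 0 := pow_ne_zero _ hx
      simp only [steinF, Finset.sum_range_succ _ (m+1)]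
      rw [steinD]
      push_cast [Nat.factorial_succ]
      field_simp
      ring

lemma sum_steinD_lt (x : ℝ) {j k : ℕ} (h : k + 1 ≤ j) :
    ∑ l ∈ Finset.range (k+1), steinD x j l = -(poiPMF x j) * expF x (k+1) := by
  rw [expF, Finset.mul_sum, Finset.sum_congr rfl]
  intro l hl
  rw [Finset.mem_range] at hl
  have : l ≠ j := by omega
  simp [steinD, this]
  ring

lemma sum_steinD_ge (x : ℝ) {j k : ℕ} (h : j ≤ k) :
    ∑ l ∈ Finset.range (k+1), steinD x j l
      = Real.exp (-x) * (x ^ j / Nat.factorial j) * (Real.exp x - expF x (k+1)) := by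
  have hj : j ∈ Finset.range (k+1) := Finset.mem_range.2 (by omega)
  have : ∑ l ∈ Finset.range (k+1), steinD x j l
      = (∑ l ∈ Finset.range (k+1), (if l = j then (1:ℝ) else 0) * x ^ l / Nat.factorial l)
        - poiPMF x j * expF x (k+1) := by
    rw [expF, Finset.mul_sum, ← Finset.sum_sub_distrib]
    refine Finset.sum_congr rfl fun l _ => ?_
    rw [steinD]; ring
  rw [this]
  have h2 : ∑ l ∈ Finset.range (k+1), (if l = j then (1:ℝ) else 0) * x ^ l / Nat.factorial l
      = x ^ j / Nat.factorial j := by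
    rw [Finset.sum_congr rfl (fun l _ => by rw [ite_mul, one_mul, zero_mul, ite_div, zero_div]),
      Finset.sum_ite_eq' (Finset.range (k+1)) j (fun l => x ^ l / (Nat.factorial l : ℝ)), if_pos hj]
  rw [h2, poiPMF]
  have he : Real.exp (-x) * Real.exp x = 1 := by
    rw [← Real.exp_add]; simp
  field_simp
  linear_combination (-(x ^ j)) * he

lemma aux_xexpF {x : ℝ} (hx : 0 ≤ x) (k : ℕ) :
    x * expF x k ≤ k * (expF x (k+1) - 1) := by
  have h1 : expF x (k+1) = (∑ l ∈ Finset.range k, x ^ (l+1) / Nat.factorial (l+1)) + 1 := by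
    rw [expF, Finset.sum_range_succ']
    simp
  have h2 : x * expF x k = ∑ l ∈ Finset.range k, x ^ (l+1) / Nat.factorial l := by
    rw [expF, Finset.mul_sum]
    refine Finset.sum_congr rfl fun l _ => ?_
    rw [pow_succ]; ring
  rw [h1, h2, add_sub_cancel_right, Finset.mul_sum]
  refine Finset.sum_le_sum fun l hl => ?_
  rw [Finset.mem_range] at hl
  have hxp : (0:ℝ) ≤ x ^ (l+1) := pow_nonneg hx _
  have hfl : (0:ℝ) < Nat.factorial l := by positivity
  have hfl1 : ((l+1).factorial : ℝ) = (l+1) * Nat.factorial l := by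
    push_cast [Nat.factorial_succ]; ring
  have hll : (l+1:ℝ) ≤ k := by exact_mod_cast hl
  have hf1pos : (0:ℝ) < ((l+1).factorial : ℝ) := by positivity
  rw [← mul_div_assoc, div_le_div_iff₀ hfl hf1pos, hfl1]
  nlinarith [mul_nonneg (sub_nonneg.2 hll) (mul_nonneg hxp hfl.le)]

lemma tail_eq (x : ℝ) (m : ℕ) :
    Real.exp x - expF x m = ∑' l : ℕ, x ^ (l + m) / Nat.factorial (l + m) := by
  have hs : Summable (fun n : ℕ => x ^ n / Nat.factorial n) := Real.summable_pow_div_factorial x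
  have he : Real.exp x = ∑' n : ℕ, x ^ n / Nat.factorial n := by
    rw [Real.exp_eq_exp_ℝ, NormedSpace.exp_eq_tsum_div]
  have := Summable.sum_add_tsum_nat_add (f := fun n : ℕ => x ^ n / Nat.factorial n) m hs
  rw [he, ← this, expF]
  ring

lemma summable_tail (x : ℝ) (m : ℕ) :
    Summable (fun l : ℕ => x ^ (l + m) / Nat.factorial (l + m)) :=
  (summable_nat_add_iff m).2 (Real.summable_pow_div_factorial x)

lemma tail_nonneg {x : ℝ} (hx : 0 ≤ x) (m : ℕ) : 0 ≤ Real.exp x - expF x m := by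
  rw [tail_eq]
  exact tsum_nonneg fun l => by positivity

lemma aux_tail {x : ℝ} (hx : 0 ≤ x) (k : ℕ) :
    (k:ℝ) * (Real.exp x - expF x (k+1)) ≤ x * (Real.exp x - expF x k) := by
  rw [tail_eq, tail_eq, ← tsum_mul_left, ← tsum_mul_left]
  refine Summable.tsum_le_tsum (fun l => ?_) ((summable_tail x (k+1)).mul_left _)
    ((summable_tail x k).mul_left _)
  have h1 : x * (x ^ (l + k) / Nat.factorial (l + k)) = x ^ (l + (k+1)) / Nat.factorial (l+k) := by
    rw [show l + (k+1) = (l+k)+1 by ring, pow_succ]; ring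
  rw [h1]
  have hf1 : ((l + (k+1)).factorial : ℝ) = (l+k+1) * Nat.factorial (l+k) := by
    rw [show l + (k+1) = (l+k)+1 by ring]
    push_cast [Nat.factorial_succ]; ring
  have hxp : (0:ℝ) ≤ x ^ (l + (k+1)) := pow_nonneg hx _
  have hfl : (0:ℝ) < Nat.factorial (l+k) := by positivity
  have hfpos : (0:ℝ) < ((l + (k+1)).factorial : ℝ) := by positivity
  rw [← mul_div_assoc, div_le_div_iff₀ hfpos hfl, hf1]
  nlinarith [mul_nonneg hxp hfl.le]

lemma poiPMF_nonneg {x : ℝ} (hx : 0 ≤ x) (j : ℕ) : 0 ≤ poiPMF x j := by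
  rw [poiPMF]; positivity

lemma expF_nonneg {x : ℝ} (hx : 0 ≤ x) (k : ℕ) : 0 ≤ expF x k := by
  rw [expF]; positivity

lemma steinF_delta (x : ℝ) (hx : 0 < x) (j m : ℕ) :
    steinF x j (m+2) - steinF x j (m+1) ≤ if j = m + 1 then (1 - Real.exp (-x)) / x else 0 := by
  have hxne : x ≠ 0 := ne_of_gt hx
  have hc : (0:ℝ) < (Nat.factorial m : ℝ) / x ^ (m+2) := by positivity
  have e1 : (Nat.factorial m : ℝ) / x ^ (m+1) = (Nat.factorial m : ℝ) / x ^ (m+2) * x := by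
    field_simp; ring
  have e2 : ((Nat.factorial (m+1)) : ℝ) / x ^ (m+2)
      = (Nat.factorial m : ℝ) / x ^ (m+2) * (m+1) := by
    push_cast [Nat.factorial_succ]; ring
  rcases lt_trichotomy j (m+1) with hj | hj | hj
  · -- j ≤ m : both upper branch
    rw [if_neg (by omega)]
    have hs1 : steinF x j (m+2)
        = (Nat.factorial (m+1) : ℝ) / x ^ (m+2)
          * (Real.exp (-x) * (x ^ j / Nat.factorial j) * (Real.exp x - expF x (m+2))) := by
      rw [steinF, sum_steinD_ge x (by omega)]
    have hs2 : steinF x j (m+1)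
        = (Nat.factorial m : ℝ) / x ^ (m+1)
          * (Real.exp (-x) * (x ^ j / Nat.factorial j) * (Real.exp x - expF x (m+1))) := by
      rw [steinF, sum_steinD_ge x (by omega)]
    have key : ((m:ℝ)+1) * (Real.exp x - expF x (m+2)) ≤ x * (Real.exp x - expF x (m+1)) := by
      have := aux_tail hx.le (m+1)
      push_cast at this ⊢
      convert this using 2 <;> push_cast <;> ring
    have hw : (0:ℝ) ≤ Real.exp (-x) * (x ^ j / Nat.factorial j) := by positivity
    rw [hs1, hs2, e1, e2]
    nlinarith [mul_nonneg hw (mul_nonneg hc.le (sub_nonneg.2 key))]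
  · -- j = m+1 : diagonal
    subst hj
    rw [if_pos rfl]
    have hs1 : steinF x (m+1) (m+2)
        = (Nat.factorial (m+1) : ℝ) / x ^ (m+2)
          * (Real.exp (-x) * (x ^ (m+1) / Nat.factorial (m+1)) * (Real.exp x - expF x (m+2))) := by
      rw [steinF, sum_steinD_ge x (by omega)]
    have hs2 : steinF x (m+1) (m+1)
        = (Nat.factorial m : ℝ) / x ^ (m+1) * (-(poiPMF x (m+1)) * expF x (m+1)) := by
      rw [steinF, sum_steinD_lt x (by omega)]
    have hfm : (0:ℝ) < (Nat.factorial m : ℝ) := by positivity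
    have hfm1 : ((Nat.factorial (m+1)) : ℝ) = (m+1) * Nat.factorial m := by
      push_cast [Nat.factorial_succ]; ring
    have hA : steinF x (m+1) (m+2) = Real.exp (-x) * (Real.exp x - expF x (m+2)) / x := by
      rw [hs1, hfm1]
      field_simp
      ring
    have hB : steinF x (m+1) (m+1) = -(Real.exp (-x) * expF x (m+1) / (m+1)) := by
      rw [hs2, poiPMF, hfm1]
      field_simp
    rw [hA, hB]
    have key : x * expF x (m+1) ≤ ((m:ℝ)+1) * (expF x (m+2) - 1) := by
      have := aux_xexpF hx.le (m+1)
      push_cast at this ⊢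
      convert this using 2 <;> push_cast <;> ring
    have hexp : (0:ℝ) < Real.exp (-x) := Real.exp_pos _
    have hm1 : (0:ℝ) < (m:ℝ)+1 := by positivity
    rw [sub_neg_eq_add, div_add_div _ _ hxne (ne_of_gt hm1), div_le_div_iff₀ (by positivity) hx]
    have hprod : 0 ≤ x * Real.exp (-x) * (((m:ℝ)+1) * (expF x (m+2) - 1) - x * expF x (m+1)) :=
      mul_nonneg (mul_nonneg hx.le hexp.le) (sub_nonneg.2 key)
    have he2 : x * ((m:ℝ)+1) * (Real.exp (-x) * Real.exp x) = x * ((m:ℝ)+1) := by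
      rw [← Real.exp_add]; simp
    nlinarith [hprod, he2]
  · -- j ≥ m+2 : both lower branch
    rw [if_neg (by omega)]
    have hs1 : steinF x j (m+2)
        = (Nat.factorial (m+1) : ℝ) / x ^ (m+2) * (-(poiPMF x j) * expF x (m+2)) := by
      rw [steinF, sum_steinD_lt x (by omega)]
    have hs2 : steinF x j (m+1)
        = (Nat.factorial m : ℝ) / x ^ (m+1) * (-(poiPMF x j) * expF x (m+1)) := by
      rw [steinF, sum_steinD_lt x (by omega)]
    have key : x * expF x (m+1) ≤ ((m:ℝ)+1) * expF x (m+2) := by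
      have h := aux_xexpF hx.le (m+1)
      have h2 : ((m:ℝ)+1) * (expF x (m+2) - 1) ≤ ((m:ℝ)+1) * expF x (m+2) := by nlinarith
      calc x * expF x (m+1) ≤ ((m+1:ℕ):ℝ) * (expF x ((m+1)+1) - 1) := h
        _ = ((m:ℝ)+1) * (expF x (m+2) - 1) := by push_cast; ring_nf
        _ ≤ _ := h2
    have hπ : 0 ≤ poiPMF x j := poiPMF_nonneg hx.le j
    rw [hs1, hs2, e1, e2]
    nlinarith [mul_nonneg hπ (mul_nonneg hc.le (sub_nonneg.2 key))]

noncomputable def steinFA (x : ℝ) (A : Finset ℕ) (k : ℕ) : ℝ := ∑ j ∈ A, steinF x j k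

lemma steinFA_eq {x : ℝ} (hx : x ≠ 0) (A : Finset ℕ) (k : ℕ) :
    x * steinFA x A (k+1) - k * steinFA x A k
      = (if k ∈ A then 1 else 0) - ∑ j ∈ A, poiPMF x j := by
  unfold steinFA
  rw [Finset.mul_sum, Finset.mul_sum, ← Finset.sum_sub_distrib,
    Finset.sum_congr rfl (fun j _ => stein_eq x hx j k), Finset.sum_sub_distrib,
    Finset.sum_ite_eq A k (fun _ => (1:ℝ))]

lemma one_sub_exp_neg_nonneg {x : ℝ} (hx : 0 < x) : 0 ≤ (1 - Real.exp (-x)) / x := by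
  have h1 : Real.exp (-x) ≤ 1 := Real.exp_le_one_iff.2 (by linarith)
  apply div_nonneg (by linarith) hx.le

lemma steinFA_delta {x : ℝ} (hx : 0 < x) (A : Finset ℕ) (m : ℕ) :
    steinFA x A (m+2) - steinFA x A (m+1) ≤ (1 - Real.exp (-x)) / x := by
  unfold steinFA
  rw [← Finset.sum_sub_distrib]
  calc ∑ j ∈ A, (steinF x j (m+2) - steinF x j (m+1))
      ≤ ∑ j ∈ A, (if j = m+1 then (1 - Real.exp (-x)) / x else 0) :=
        Finset.sum_le_sum fun j _ => steinF_delta x hx j m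
    _ = (if m+1 ∈ A then (1 - Real.exp (-x)) / x else 0) :=
        Finset.sum_ite_eq' A (m+1) (fun _ => (1 - Real.exp (-x)) / x)
    _ ≤ (1 - Real.exp (-x)) / x := by
        split
        · exact le_refl _
        · exact one_sub_exp_neg_nonneg hx

/-- the involutive pairing equiv used for conditioning on coordinate `i`. -/
def flipEquiv {n : ℕ} (i : Fin n) : ((Fin n → Bool) × Bool) ≃ ((Fin n → Bool) × Bool) where
  toFun q := (Function.update q.1 i q.2, q.1 i)
  invFun q := (Function.update q.1 i q.2, q.1 i)
  left_inv q := by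
    ext j
    · by_cases h : j = i <;> simp [Function.update, h]
    · simp [Function.update]
  right_inv q := by
    ext j
    · by_cases h : j = i <;> simp [Function.update, h]
    · simp [Function.update]

lemma double_sum {n : ℕ} (i : Fin n) (Φ : (Fin n → Bool) → ℝ) :
    2 * ∑ u : Fin n → Bool, Φ u
      = ∑ u : Fin n → Bool,
          (Φ (Function.update u i false) + Φ (Function.update u i true)) := by
  have h := Fintype.sum_equiv (flipEquiv i)
    (fun q : (Fin n → Bool) × Bool => Φ (Function.update q.1 i q.2))
    (fun q : (Fin n → Bool) × Bool => Φ q.1) (fun q => rfl)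
  rw [Fintype.sum_prod_type] at h
  rw [Fintype.sum_prod_type] at h
  simp only [Fintype.sum_bool] at h
  calc 2 * ∑ u : Fin n → Bool, Φ u = ∑ u : Fin n → Bool, (Φ u + Φ u) := by
        rw [Finset.sum_add_distrib]; ring
    _ = ∑ u : Fin n → Bool,
          (Φ (Function.update u i true) + Φ (Function.update u i false)) := h.symm
    _ = _ := Finset.sum_congr rfl fun u _ => add_comm _ _

noncomputable def condW {n : ℕ} (p : Fin n → ℝ) (i : Fin n) (u : Fin n → Bool) : ℝ :=
  ∏ j ∈ Finset.univ \ {i}, (if u j then p j else 1 - p j)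

def condC {n : ℕ} (i : Fin n) (u : Fin n → Bool) : ℕ :=
  ∑ j ∈ Finset.univ \ {i}, (if u j then 1 else 0)

lemma bern_update {n : ℕ} (p : Fin n → ℝ) (i : Fin n) (u : Fin n → Bool) (b : Bool) :
    bernProb p (Function.update u i b) = (if b then p i else 1 - p i) * condW p i u := by
  unfold bernProb condW
  have h : ∀ j, (if Function.update u i b j then p j else 1 - p j)
      = Function.update (fun j => if u j then p j else 1 - p j) i
          (if b then p i else 1 - p i) j := by
    intro j
    by_cases hj : j = i <;> simp [Function.update, hj]
  rw [Finset.prod_congr rfl (fun j _ => h j), Finset.prod_update_of_mem (Finset.mem_univ i)]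

lemma count_update {n : ℕ} (i : Fin n) (u : Fin n → Bool) (b : Bool) :
    countOnes (Function.update u i b) = (if b then 1 else 0) + condC i u := by
  unfold countOnes condC
  have h : ∀ j, (if Function.update u i b j then (1:ℕ) else 0)
      = Function.update (fun j => if u j then (1:ℕ) else 0) i (if b then 1 else 0) j := by
    intro j
    by_cases hj : j = i <;> simp [Function.update, hj]
  rw [Finset.sum_congr rfl (fun j _ => h j), Finset.sum_update_of_mem (Finset.mem_univ i)]

lemma sum_bern {n : ℕ} (p : Fin n → ℝ) : ∑ u : Fin n → Bool, bernProb p u = 1 := by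
  unfold bernProb
  rw [← Fintype.prod_sum (fun j (b : Bool) => if b then p j else 1 - p j)]
  simp

lemma sum_condW {n : ℕ} (p : Fin n → ℝ) (i : Fin n) :
    ∑ u : Fin n → Bool, condW p i u = 2 := by
  have h1 : ∀ u : Fin n → Bool, condW p i u
      = ∏ j, (if j = i then 1 else if u j then p j else 1 - p j) := by
    intro u
    rw [Finset.prod_eq_mul_prod_sdiff_singleton_of_mem (Finset.mem_univ i)
      (fun j => if j = i then (1:ℝ) else if u j then p j else 1 - p j), if_pos rfl, one_mul]
    unfold condW
    refine (Finset.prod_congr rfl fun j hj => ?_).symm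
    rw [Finset.mem_sdiff, Finset.mem_singleton] at hj
    rw [if_neg hj.2]
  rw [Finset.sum_congr rfl (fun u _ => h1 u),
    ← Fintype.prod_sum (fun j (b : Bool) => if j = i then (1:ℝ) else if b then p j else 1 - p j)]
  have h2 : ∀ j, (∑ b : Bool, if j = i then (1:ℝ) else if b then p j else 1 - p j)
      = if j = i then 2 else 1 := by
    intro j
    by_cases hj : j = i <;> simp [hj] <;> ring
  rw [Finset.prod_congr rfl (fun j _ => h2 j), Finset.prod_ite_eq' Finset.univ i (fun _ => (2:ℝ)),
    if_pos (Finset.mem_univ i)]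

lemma condW_nonneg {n : ℕ} {p : Fin n → ℝ} (hp : ∀ i, 0 < p i ∧ p i < 1) (i : Fin n)
    (u : Fin n → Bool) : 0 ≤ condW p i u := by
  refine Finset.prod_nonneg fun j _ => ?_
  rcases hp j with ⟨h1, h2⟩
  split <;> linarith

lemma per_i {n : ℕ} (p : Fin n → ℝ) (i : Fin n) (f : ℕ → ℝ) :
    ∑ u : Fin n → Bool,
        bernProb p u * (p i * f (countOnes u + 1) - (if u i then 1 else 0) * f (countOnes u))
      = (1/2) * ∑ u : Fin n → Bool,
          condW p i u * (p i ^ 2 * (f (condC i u + 2) - f (condC i u + 1))) := by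
  have hd := double_sum i (fun u => bernProb p u *
    (p i * f (countOnes u + 1) - (if u i then 1 else 0) * f (countOnes u)))
  have hpt : ∀ u : Fin n → Bool,
      (fun u => bernProb p u *
        (p i * f (countOnes u + 1) - (if u i then 1 else 0) * f (countOnes u)))
          (Function.update u i false)
      + (fun u => bernProb p u *
        (p i * f (countOnes u + 1) - (if u i then 1 else 0) * f (countOnes u)))
          (Function.update u i true)
      = condW p i u * (p i ^ 2 * (f (condC i u + 2) - f (condC i u + 1))) := by
    intro u
    simp only [bern_update, count_update, Function.update_self]
    norm_num
    ring
  rw [Finset.sum_congr rfl (fun u _ => hpt u)] at hd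
  linarith [hd]

lemma main_est {n : ℕ} (hn : 0 < n) (p : Fin n → ℝ) (hp : ∀ i, 0 < p i ∧ p i < 1)
    (A : Finset ℕ) :
    (∑ u : Fin n → Bool, bernProb p u * (if countOnes u ∈ A then 1 else 0))
        - (∑ j ∈ A, poiPMF (∑ i, p i) j)
      ≤ (1 - Real.exp (-(∑ i, p i))) * (∑ i, p i)⁻¹ * ∑ i, (p i) ^ 2 := by
  have : Nonempty (Fin n) := ⟨⟨0, hn⟩⟩
  set x := ∑ i, p i with hxdef
  have hx : 0 < x := Finset.sum_pos (fun i _ => (hp i).1) Finset.univ_nonempty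
  set f := steinFA x A with hfdef
  set M := (1 - Real.exp (-x)) / x with hMdef
  have hM : 0 ≤ M := one_sub_exp_neg_nonneg hx
  have step1 : (∑ u : Fin n → Bool, bernProb p u * (if countOnes u ∈ A then 1 else 0))
      - (∑ j ∈ A, poiPMF x j)
      = ∑ u : Fin n → Bool, bernProb p u *
          ((if countOnes u ∈ A then 1 else 0) - ∑ j ∈ A, poiPMF x j) := by
    rw [Finset.sum_congr rfl (fun u _ => mul_sub (bernProb p u) _ _), Finset.sum_sub_distrib,
      ← Finset.sum_mul, sum_bern, one_mul]
  have step2 : ∀ u : Fin n → Bool,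
      bernProb p u * ((if countOnes u ∈ A then 1 else 0) - ∑ j ∈ A, poiPMF x j)
      = ∑ i, bernProb p u *
          (p i * f (countOnes u + 1) - (if u i then 1 else 0) * f (countOnes u)) := by
    intro u
    rw [← steinFA_eq (ne_of_gt hx) A (countOnes u), ← hfdef, ← Finset.mul_sum]
    congr 1
    have hc : (countOnes u : ℝ) = ∑ i, (if u i then (1:ℝ) else 0) := by
      rw [countOnes]; push_cast; rfl
    rw [Finset.sum_sub_distrib, ← Finset.sum_mul, ← Finset.sum_mul, ← hxdef, ← hc]
  have step3 : (∑ u : Fin n → Bool, bernProb p u * (if countOnes u ∈ A then 1 else 0))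
      - (∑ j ∈ A, poiPMF x j)
      = ∑ i, (1/2) * ∑ u : Fin n → Bool,
          condW p i u * (p i ^ 2 * (f (condC i u + 2) - f (condC i u + 1))) := by
    rw [step1, Finset.sum_congr rfl (fun u _ => step2 u), Finset.sum_comm]
    exact Finset.sum_congr rfl fun i _ => per_i p i f
  rw [step3]
  have bound_i : ∀ i : Fin n, (1/2) * (∑ u : Fin n → Bool,
      condW p i u * (p i ^ 2 * (f (condC i u + 2) - f (condC i u + 1))))
      ≤ p i ^ 2 * M := by
    intro i
    have h1 : ∑ u : Fin n → Bool,
        condW p i u * (p i ^ 2 * (f (condC i u + 2) - f (condC i u + 1)))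
        ≤ ∑ u : Fin n → Bool, condW p i u * (p i ^ 2 * M) := by
      refine Finset.sum_le_sum fun u _ => ?_
      refine mul_le_mul_of_nonneg_left ?_ (condW_nonneg hp i u)
      refine mul_le_mul_of_nonneg_left ?_ (sq_nonneg _)
      exact steinFA_delta hx A (condC i u)
    have h2 : ∑ u : Fin n → Bool, condW p i u * (p i ^ 2 * M) = 2 * (p i ^ 2 * M) := by
      rw [← Finset.sum_mul, sum_condW]
    linarith
  calc ∑ i, (1/2) * ∑ u : Fin n → Bool,
        condW p i u * (p i ^ 2 * (f (condC i u + 2) - f (condC i u + 1)))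
      ≤ ∑ i, p i ^ 2 * M := Finset.sum_le_sum fun i _ => bound_i i
    _ = (1 - Real.exp (-x)) * x⁻¹ * ∑ i, (p i) ^ 2 := by
        rw [← Finset.sum_mul, hMdef, div_eq_mul_inv]; ring

lemma bernProb_nonneg {n : ℕ} {p : Fin n → ℝ} (hp : ∀ i, 0 < p i ∧ p i < 1)
    (u : Fin n → Bool) : 0 ≤ bernProb p u := by
  refine Finset.prod_nonneg fun j _ => ?_
  rcases hp j with ⟨h1, h2⟩
  split <;> linarith

lemma lawS_nonneg {n : ℕ} {p : Fin n → ℝ} (hp : ∀ i, 0 < p i ∧ p i < 1) (k : ℕ) :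
    0 ≤ lawS p k := by
  refine Finset.sum_nonneg fun u _ => ?_
  split
  · exact bernProb_nonneg hp u
  · exact le_refl 0

lemma countOnes_le {n : ℕ} (u : Fin n → Bool) : countOnes u ≤ n := by
  unfold countOnes
  calc ∑ i, (if u i then 1 else 0) ≤ ∑ _i : Fin n, 1 :=
        Finset.sum_le_sum fun i _ => by split <;> omega
    _ = n := by simp

lemma lawS_eq_zero {n : ℕ} (p : Fin n → ℝ) {k : ℕ} (hk : n < k) : lawS p k = 0 := by
  unfold lawS
  refine Finset.sum_eq_zero fun u _ => ?_
  rw [if_neg]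
  have := countOnes_le u
  omega

lemma poiPMF_summable (x : ℝ) : Summable (poiPMF x) := by
  have : poiPMF x = fun k => Real.exp (-x) * (x ^ k / Nat.factorial k) := by
    funext k; rw [poiPMF, mul_div_assoc]
  rw [this]
  exact (Real.summable_pow_div_factorial x).mul_left _

lemma poiPMF_tsum (x : ℝ) : ∑' k, poiPMF x k = 1 := by
  have h1 : ∀ k, poiPMF x k = Real.exp (-x) * (x ^ k / Nat.factorial k) := fun k => by
    rw [poiPMF, mul_div_assoc]
  rw [tsum_congr h1, tsum_mul_left]
  have he : (∑' k : ℕ, x ^ k / (Nat.factorial k : ℝ)) = Real.exp x := by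
    rw [Real.exp_eq_exp_ℝ, NormedSpace.exp_eq_tsum_div]
  rw [he, ← Real.exp_add]
  simp

lemma lawS_sum {n : ℕ} (p : Fin n → ℝ) : ∑ k ∈ Finset.range (n+1), lawS p k = 1 := by
  unfold lawS
  rw [Finset.sum_comm]
  rw [← sum_bern p]
  refine Finset.sum_congr rfl fun u _ => ?_
  have h1 : ∀ k, (if countOnes u = k then bernProb p u else 0)
      = (if k = countOnes u then bernProb p u else 0) := fun k => by
    by_cases h : countOnes u = k
    · rw [if_pos h, if_pos h.symm]
    · rw [if_neg h, if_neg (fun h' => h h'.symm)]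
  rw [Finset.sum_congr rfl (fun k _ => h1 k),
    Finset.sum_ite_eq' (Finset.range (n+1)) (countOnes u) (fun _ => bernProb p u),
    if_pos (Finset.mem_range.2 (Nat.lt_succ_of_le (countOnes_le u)))]

lemma lawS_summable {n : ℕ} (p : Fin n → ℝ) : Summable (lawS p) :=
  summable_of_ne_finset_zero (s := Finset.range (n+1))
    (fun k hk => lawS_eq_zero p (by simpa [Finset.mem_range] using hk))

lemma lawS_tsum {n : ℕ} (p : Fin n → ℝ) : ∑' k, lawS p k = 1 := by
  rw [tsum_eq_sum (s := Finset.range (n+1))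
    (fun k hk => lawS_eq_zero p (by simpa [Finset.mem_range] using hk)), lawS_sum]

lemma tv_eq {n : ℕ} (p : Fin n → ℝ) (hp : ∀ i, 0 < p i ∧ p i < 1) {x : ℝ} (hx : 0 ≤ x) :
    tvDist (lawS p) (poiPMF x)
      = ∑ k ∈ (Finset.range (n+1)).filter (fun k => poiPMF x k < lawS p k),
          (lawS p k - poiPMF x k) := by
  set a := lawS p with ha
  set b := poiPMF x with hb
  set g : ℕ → ℝ := fun k => max (a k - b k) 0 with hg
  have hg0 : ∀ k ∉ Finset.range (n+1), g k = 0 := by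
    intro k hk
    rw [Finset.mem_range] at hk
    have h1 : a k = 0 := lawS_eq_zero p (by omega)
    have h2 : 0 ≤ b k := poiPMF_nonneg hx k
    rw [hg]
    simp only
    rw [max_eq_right (by linarith)]
  have hgs : Summable g := summable_of_ne_finset_zero hg0
  have has : Summable a := lawS_summable p
  have hbs : Summable b := poiPMF_summable x
  have habs : ∀ k, |a k - b k| = 2 * g k - (a k - b k) := by
    intro k
    rcases le_total (a k - b k) 0 with h | h
    · rw [abs_of_nonpos h, hg]; simp only; rw [max_eq_right h]; ring
    · rw [abs_of_nonneg h, hg]; simp only; rw [max_eq_left h]; ring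
  have htsum : ∑' k, |a k - b k| = 2 * ∑' k, g k := by
    rw [tsum_congr habs, Summable.tsum_sub (hgs.mul_left 2) (has.sub hbs), tsum_mul_left,
      Summable.tsum_sub has hbs, lawS_tsum, poiPMF_tsum]
    ring
  have hgsum : ∑' k, g k = ∑ k ∈ (Finset.range (n+1)).filter (fun k => b k < a k),
      (a k - b k) := by
    rw [tsum_eq_sum hg0, Finset.sum_filter]
    refine Finset.sum_congr rfl fun k _ => ?_
    rcases lt_or_ge (b k) (a k) with h | h
    · rw [if_pos h, hg]; simp only; rw [max_eq_left (by linarith)]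
    · rw [if_neg (not_lt.2 h), hg]; simp only; rw [max_eq_right (by linarith)]
  rw [tvDist, htsum, hgsum]
  ring

lemma sum_lawS_filter {n : ℕ} (p : Fin n → ℝ) (A : Finset ℕ) :
    ∑ k ∈ A, lawS p k
      = ∑ u : Fin n → Bool, bernProb p u * (if countOnes u ∈ A then 1 else 0) := by
  unfold lawS
  rw [Finset.sum_comm]
  refine Finset.sum_congr rfl fun u _ => ?_
  have h1 : ∀ k, (if countOnes u = k then bernProb p u else 0)
      = (if k = countOnes u then bernProb p u else 0) := fun k => by
    by_cases h : countOnes u = k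
    · rw [if_pos h, if_pos h.symm]
    · rw [if_neg h, if_neg (fun h' => h h'.symm)]
  rw [Finset.sum_congr rfl (fun k _ => h1 k),
    Finset.sum_ite_eq' A (countOnes u) (fun _ => bernProb p u)]
  by_cases h : countOnes u ∈ A
  · rw [if_pos h, if_pos h, mul_one]
  · rw [if_neg h, if_neg h, mul_zero]

/-- Le Cam / Barbour–Hall bound: if `S` is a sum of `n` independent Bernoulli(`p i`) variables,
`x = ∑ p i`, and `X ~ Poisson(x)`, then
`ρ_TV(L(S), L(X)) ≤ (1 - e^{-x}) x⁻¹ ∑ p i ² ≤ max_i p i`. -/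
theorem stmt1 {n : ℕ} (hn : 0 < n) (p : Fin n → ℝ) (hp : ∀ i, 0 < p i ∧ p i < 1) :
    tvDist (lawS p) (poiPMF (∑ i, p i)) ≤
      (1 - Real.exp (-(∑ i, p i))) * (∑ i, p i)⁻¹ * ∑ i, (p i) ^ 2 ∧
    (1 - Real.exp (-(∑ i, p i))) * (∑ i, p i)⁻¹ * ∑ i, (p i) ^ 2 ≤
      Finset.univ.sup' ⟨⟨0, hn⟩, Finset.mem_univ _⟩ p := by
  have hne : Nonempty (Fin n) := ⟨⟨0, hn⟩⟩
  have hx : 0 < ∑ i, p i := Finset.sum_pos (fun i _ => (hp i).1) Finset.univ_nonempty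
  constructor
  · set x := ∑ i, p i with hxdef
    set A := (Finset.range (n+1)).filter (fun k => poiPMF x k < lawS p k) with hA
    rw [tv_eq p hp hx.le, Finset.sum_sub_distrib, sum_lawS_filter]
    exact main_est hn p hp A
  · set x := ∑ i, p i with hxdef
    set m := Finset.univ.sup' ⟨⟨0, hn⟩, Finset.mem_univ _⟩ p with hm
    have hpm : ∀ i, p i ≤ m := fun i => Finset.le_sup' p (Finset.mem_univ i)
    have hm0 : 0 < m := lt_of_lt_of_le (hp ⟨0, hn⟩).1 (hpm _)
    have hsum : ∑ i, (p i) ^ 2 ≤ m * x := by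
      rw [hxdef, Finset.mul_sum]
      refine Finset.sum_le_sum fun i _ => ?_
      rw [sq]
      exact mul_le_mul_of_nonneg_right (hpm i) (hp i).1.le
    have h1e : 1 - Real.exp (-x) ≤ 1 := by
      have := Real.exp_pos (-x)
      linarith
    have hsq : 0 ≤ ∑ i, (p i) ^ 2 := Finset.sum_nonneg fun i _ => sq_nonneg _
    have hinv : 0 ≤ x⁻¹ := inv_nonneg.2 hx.le
    calc (1 - Real.exp (-x)) * x⁻¹ * ∑ i, (p i) ^ 2
        ≤ 1 * x⁻¹ * ∑ i, (p i) ^ 2 := by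
          refine mul_le_mul_of_nonneg_right (mul_le_mul_of_nonneg_right h1e hinv) hsq
      _ = x⁻¹ * ∑ i, (p i) ^ 2 := by ring
      _ ≤ x⁻¹ * (m * x) := mul_le_mul_of_nonneg_left hsum hinv
      _ = m := by field_simp
end

section
/- Let h : ℕ → ℝ and α > 0, and suppose E[|Δh(V)|] < ∞ for V ~ Poisson(α), where Δh(k) = h(k+1) - h(k). Then ĥ(x) = E[h(X)] for X ~ Poisson(x) is continuously differentiable on [0, α] with derivative ĥ'(x) = E[Δh(X)] = ∑_{k=0}^∞ (h(k+1) - h(k)) e^{-x} x^k / k!. -/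
open scoped BigOperators
open Finset Filter Set
open scoped Topology

set_option maxHeartbeats 2000000

lemma lemA {α : ℝ} (hα : 0 < α) {b : ℕ → ℝ} (hb : ∀ j, 0 ≤ b j)
    (hs : Summable fun j => b j * (α ^ j / (Nat.factorial j : ℝ))) :
    Summable fun k => (∑ j ∈ Finset.range (k + 1), b j) * (α ^ k / (Nat.factorial k : ℝ)) := by
  set q : ℕ → ℝ := fun k => α ^ k / (Nat.factorial k : ℝ) with hqdef
  have hq0 : ∀ k, 0 ≤ q k := fun k => div_nonneg (pow_nonneg hα.le _) (Nat.cast_nonneg _)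
  have hqsum : Summable q := Real.summable_pow_div_factorial α
  have hqmul : ∀ j m, q (j + m) ≤ q j * q m := by
    intro j m
    have h1 : (Nat.factorial j : ℝ) * (Nat.factorial m) ≤ (Nat.factorial (j + m)) := by
      exact_mod_cast Nat.le_of_dvd (Nat.factorial_pos _)
        (Nat.factorial_mul_factorial_dvd_factorial_add j m)
    have h2 : (0:ℝ) < (Nat.factorial j : ℝ) * (Nat.factorial m) := by positivity
    calc q (j + m) ≤ α ^ (j + m) / ((Nat.factorial j : ℝ) * (Nat.factorial m)) :=
          div_le_div_of_nonneg_left (pow_nonneg hα.le _) h2 h1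
      _ = q j * q m := by rw [pow_add, div_mul_div_comm]
  set E : ℝ := ∑' m, q m with hE
  have hE0 : 0 ≤ E := tsum_nonneg hq0
  set F : ℕ × ℕ → ℝ := fun p => if p.1 ≤ p.2 then b p.1 * q p.2 else 0 with hFdef
  have hF0 : ∀ p, 0 ≤ F p := by
    intro p; simp only [hFdef]
    split
    · exact mul_nonneg (hb _) (hq0 _)
    · exact le_refl 0
  have hrow : ∀ j, Summable fun k => F (j, k) := by
    intro j
    apply Summable.of_nonneg_of_le (fun k => hF0 (j, k)) (fun k => ?_) (hqsum.mul_left (b j))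
    simp only [hFdef]
    split
    · exact le_refl _
    · exact mul_nonneg (hb j) (hq0 k)
  have hshift : ∀ j, Summable fun m => F (j, m + j) := fun j => (summable_nat_add_iff j).2 (hrow j)
  have hrowsum : ∀ j, ∑' k, F (j, k) ≤ b j * q j * E := by
    intro j
    have h0 : ∑' k, F (j, k) = ∑' m, F (j, m + j) := by
      rw [← Summable.sum_add_tsum_nat_add j (hrow j)]
      have : ∑ i ∈ range j, F (j, i) = 0 := by
        apply Finset.sum_eq_zero
        intro i hi
        simp only [hFdef, if_neg (Nat.not_le.2 (Finset.mem_range.1 hi))]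
      rw [this, zero_add]
    rw [h0]
    have hle : ∀ m, F (j, m + j) ≤ b j * q j * q m := by
      intro m
      have : F (j, m + j) = b j * q (j + m) := by
        simp only [hFdef, Nat.add_comm m j]
        exact if_pos (Nat.le_add_right j m)
      rw [this, mul_assoc]
      exact mul_le_mul_of_nonneg_left (hqmul j m) (hb j)
    calc ∑' m, F (j, m + j) ≤ ∑' m, b j * q j * q m :=
          Summable.tsum_le_tsum hle (hshift j) (hqsum.mul_left _)
      _ = b j * q j * E := tsum_mul_left
  have hs' : Summable fun j => b j * q j * E := (hs.mul_right E)
  have hcol : Summable fun j => ∑' k, F (j, k) :=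
    Summable.of_nonneg_of_le (fun j => tsum_nonneg fun k => hF0 (j, k)) hrowsum hs'
  have hF : Summable F := (summable_prod_of_nonneg hF0).2 ⟨hrow, hcol⟩
  have hswap : Summable fun p : ℕ × ℕ => F p.swap := hF.prod_symm
  have hcols : Summable fun k => ∑' j, F (j, k) := by
    have := (summable_prod_of_nonneg (f := fun p : ℕ × ℕ => F p.swap)
      (fun p => hF0 p.swap)).1 hswap
    exact this.2
  apply hcols.congr
  intro k
  have h1 : ∑' j, F (j, k) = ∑ j ∈ range (k + 1), F (j, k) := by
    apply tsum_eq_sum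
    intro j hj
    simp only [Finset.mem_range] at hj
    simp only [hFdef]
    exact if_neg (by omega)
  rw [h1, Finset.sum_mul]
  apply Finset.sum_congr rfl
  intro j hj
  simp only [hFdef, if_pos (Nat.lt_succ_iff.1 (Finset.mem_range.1 hj))]
  rfl

/-- If `E[|Δh(V)|] < ∞` for `V ~ Poisson(α)`, then `ĥ(x) = E[h(X)]`, `X ~ Poisson(x)`, is
continuously differentiable on `[0, α]` with derivative `ĥ'(x) = E[Δh(X)]`. -/
theorem stmt4 (h : ℕ → ℝ) (α : ℝ) (hα : 0 < α)
    (hsum : Summable fun k => |h (k + 1) - h k| * poiPMF α k) :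
    (∀ x ∈ Set.Icc (0 : ℝ) α,
      HasDerivWithinAt (fun z : ℝ => ∑' k : ℕ, h k * poiPMF z k)
        (∑' k : ℕ, (h (k + 1) - h k) * poiPMF x k) (Set.Icc 0 α) x) ∧
    ContinuousOn (fun x : ℝ => ∑' k : ℕ, (h (k + 1) - h k) * poiPMF x k) (Set.Icc 0 α) := by
  classical
  set q : ℕ → ℝ := fun k => α ^ k / (Nat.factorial k : ℝ) with hqdef
  have hq0 : ∀ k, 0 ≤ q k := fun k => div_nonneg (pow_nonneg hα.le _) (Nat.cast_nonneg _)
  have hqsum : Summable q := Real.summable_pow_div_factorial α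
  have hpb : ∀ x : ℝ, |x| ≤ α → ∀ k, |poiPMF x k| ≤ Real.exp α * q k := by
    intro x hx k
    have h1 : |poiPMF x k| = Real.exp (-x) * |x| ^ k / (Nat.factorial k : ℝ) := by
      simp [poiPMF, abs_div, abs_mul, abs_pow, Real.abs_exp, Nat.abs_cast]
    rw [h1]
    have h2 : Real.exp (-x) * |x| ^ k / (Nat.factorial k : ℝ)
        ≤ Real.exp α * α ^ k / (Nat.factorial k : ℝ) := by
      gcongr <;> first
        | exact le_trans (neg_le_abs x) hx
        | exact hx
    calc Real.exp (-x) * |x| ^ k / (Nat.factorial k : ℝ)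
        ≤ Real.exp α * α ^ k / (Nat.factorial k : ℝ) := h2
      _ = Real.exp α * q k := by rw [hqdef, mul_div_assoc]
  have hb' : Summable fun j => |h (j + 1) - h j| * q j := by
    have hexp : Real.exp α * Real.exp (-α) = 1 := by
      rw [← Real.exp_add]; simp
    apply (hsum.mul_left (Real.exp α)).congr
    intro k
    simp only [poiPMF, hqdef]
    field_simp
    linear_combination |h (k + 1) - h k| * hexp
  set H : ℕ → ℝ := fun k => ∑ j ∈ Finset.range (k + 1), |h (j + 1) - h j| with hHdef
  have hH : Summable fun k => H k * q k := lemA hα (fun j => abs_nonneg _) hb'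
  have hH0 : ∀ k, 0 ≤ H k := fun k => Finset.sum_nonneg fun j _ => abs_nonneg _
  have hkey : ∀ k, |h k| ≤ |h 0| + ∑ j ∈ Finset.range k, |h (j + 1) - h j| := by
    intro k
    have ht : h k = h 0 + ∑ j ∈ Finset.range k, (h (j + 1) - h j) := by
      rw [Finset.sum_range_sub h k]; ring
    calc |h k| = |h 0 + ∑ j ∈ Finset.range k, (h (j + 1) - h j)| := by rw [← ht]
      _ ≤ |h 0| + |∑ j ∈ Finset.range k, (h (j + 1) - h j)| := abs_add_le _ _
      _ ≤ |h 0| + ∑ j ∈ Finset.range k, |h (j + 1) - h j| := by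
          gcongr
          exact Finset.abs_sum_le_sum_abs _ _
  have habs : ∀ k, |h k| ≤ |h 0| + H k := by
    intro k
    refine (hkey k).trans ?_
    gcongr
    apply Finset.sum_le_sum_of_subset_of_nonneg (Finset.range_subset_range.2 (Nat.le_succ k))
    intro j _ _; exact abs_nonneg _
  have habs1 : ∀ k, |h (k + 1)| ≤ |h 0| + H k := fun k => hkey (k + 1)
  have hbig : Summable fun k => (|h 0| + H k) * q k := by
    apply ((hqsum.mul_left |h 0|).add hH).congr
    intro k; ring
  have S2 : Summable fun k => |h k| * q k :=
    Summable.of_nonneg_of_le (fun k => mul_nonneg (abs_nonneg _) (hq0 k))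
      (fun k => mul_le_mul_of_nonneg_right (habs k) (hq0 k)) hbig
  have S3 : Summable fun k => |h (k + 1)| * q k :=
    Summable.of_nonneg_of_le (fun k => mul_nonneg (abs_nonneg _) (hq0 k))
      (fun k => mul_le_mul_of_nonneg_right (habs1 k) (hq0 k)) hbig
  have hpcont : ∀ k, Continuous fun x : ℝ => poiPMF x k := by
    intro k
    exact ((Real.continuous_exp.comp continuous_neg).mul (continuous_pow k)).div_const _
  have habsx : ∀ x ∈ Set.Icc (0:ℝ) α, |x| ≤ α := by
    intro x hx
    exact abs_le.2 ⟨by linarith [hx.1], hx.2⟩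
  -- continuity of the claimed derivative
  have contg : ContinuousOn (fun x : ℝ => ∑' k : ℕ, (h (k + 1) - h k) * poiPMF x k)
      (Set.Icc 0 α) := by
    apply continuousOn_tsum (u := fun k => Real.exp α * (|h (k + 1) - h k| * q k))
      (fun k => (continuous_const.mul (hpcont k)).continuousOn) (hb'.mul_left _)
    intro k x hx
    rw [Real.norm_eq_abs, Pi.mul_apply, abs_mul]
    calc |h (k + 1) - h k| * |poiPMF x k|
        ≤ |h (k + 1) - h k| * (Real.exp α * q k) :=
          mul_le_mul_of_nonneg_left (hpb x (habsx x hx) k) (abs_nonneg _)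
      _ = Real.exp α * (|h (k + 1) - h k| * q k) := by ring
  -- continuity of the function itself
  have contf : ContinuousOn (fun x : ℝ => ∑' k : ℕ, h k * poiPMF x k) (Set.Icc 0 α) := by
    apply continuousOn_tsum (u := fun k => Real.exp α * (|h k| * q k))
      (fun k => (continuous_const.mul (hpcont k)).continuousOn) (S2.mul_left _)
    intro k x hx
    rw [Real.norm_eq_abs, Pi.mul_apply, abs_mul]
    calc |h k| * |poiPMF x k|
        ≤ |h k| * (Real.exp α * q k) :=
          mul_le_mul_of_nonneg_left (hpb x (habsx x hx) k) (abs_nonneg _)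
      _ = Real.exp α * (|h k| * q k) := by ring
  -- derivative of each term
  set G' : ℕ → ℝ → ℝ :=
    fun k x => h k * ((if k = 0 then 0 else poiPMF x (k - 1)) - poiPMF x k) with hG'
  have hder : ∀ (k : ℕ) (x : ℝ), HasDerivAt (fun z => h k * poiPMF z k) (G' k x) x := by
    intro k x
    have he : HasDerivAt (fun z : ℝ => Real.exp (-z)) (Real.exp (-x) * (-1)) x :=
      ((hasDerivAt_id x).neg).exp
    have hp : HasDerivAt (fun z : ℝ => z ^ k) ((k : ℝ) * x ^ (k - 1)) x := hasDerivAt_pow k x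
    have hm := ((he.mul hp).div_const (Nat.factorial k : ℝ)).const_mul (h k)
    have heq : G' k x = h k * ((Real.exp (-x) * (-1) * x ^ k
        + Real.exp (-x) * ((k : ℝ) * x ^ (k - 1))) / (Nat.factorial k : ℝ)) := by
      cases k with
      | zero => simp [hG', poiPMF]
      | succ n =>
        have hf : (Nat.factorial n : ℝ) ≠ 0 := Nat.cast_ne_zero.2 (Nat.factorial_ne_zero n)
        have hn1 : ((n : ℝ) + 1) ≠ 0 := by positivity
        simp only [hG', poiPMF, if_neg (Nat.succ_ne_zero n), Nat.succ_sub_one]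
        rw [Nat.factorial_succ]
        push_cast
        field_simp
        ring
    rw [heq]
    exact hm
  -- summable bound for derivatives
  set u : ℕ → ℝ := fun k => Real.exp α * (|h k| * q k)
      + Real.exp α * (if k = 0 then 0 else |h k| * q (k - 1)) with hu
  have husum : Summable u := by
    apply Summable.add (S2.mul_left _)
    have h2 : Summable fun n : ℕ =>
        Real.exp α * (if (n + 1) = 0 then 0 else |h (n + 1)| * q ((n + 1) - 1)) := by
      simpa using S3.mul_left (Real.exp α)
    exact (summable_nat_add_iff 1).1 h2
  have hubound : ∀ (k : ℕ) (x : ℝ), |x| ≤ α → ‖G' k x‖ ≤ u k := by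
    intro k x hx
    cases k with
    | zero =>
      simp only [hG', hu, if_pos rfl, ite_true, eq_self_iff_true, Real.norm_eq_abs, zero_sub,
        abs_mul, abs_neg, mul_zero, add_zero]
      calc |h 0| * |poiPMF x 0| ≤ |h 0| * (Real.exp α * q 0) :=
            mul_le_mul_of_nonneg_left (hpb x hx 0) (abs_nonneg _)
        _ = Real.exp α * (|h 0| * q 0) := by ring
    | succ n =>
      simp only [hG', hu, if_neg (Nat.succ_ne_zero n), Nat.succ_sub_one, Real.norm_eq_abs,
        abs_mul]
      calc |h (n + 1)| * |poiPMF x n - poiPMF x (n + 1)|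
          ≤ |h (n + 1)| * (|poiPMF x n| + |poiPMF x (n + 1)|) :=
            mul_le_mul_of_nonneg_left (abs_sub _ _) (abs_nonneg _)
        _ ≤ |h (n + 1)| * (Real.exp α * q n + Real.exp α * q (n + 1)) :=
            mul_le_mul_of_nonneg_left (add_le_add (hpb x hx n) (hpb x hx (n + 1))) (abs_nonneg _)
        _ = Real.exp α * (|h (n + 1)| * q (n + 1)) + Real.exp α * (|h (n + 1)| * q n) := by ring
  have hsum0 : Summable fun k => h k * poiPMF 0 k := by
    apply summable_of_ne_finset_zero (s := ({0} : Finset ℕ))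
    intro k hk
    have hk0 : k ≠ 0 := by simpa using hk
    simp [poiPMF, zero_pow hk0]
  set t : Set ℝ := Set.Ioo (-α) α with htdef
  have h0t : (0:ℝ) ∈ t := ⟨by linarith, hα⟩
  have key : ∀ x ∈ t, HasDerivAt (fun z : ℝ => ∑' k : ℕ, h k * poiPMF z k) (∑' k, G' k x) x := by
    intro x hx
    exact hasDerivAt_tsum_of_isPreconnected husum isOpen_Ioo (convex_Ioo _ _).isPreconnected
      (fun k y _ => hder k y)
      (fun k y hy => hubound k y (abs_le.2 ⟨hy.1.le, hy.2.le⟩)) h0t hsum0 hx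
  have hGsum : ∀ x : ℝ, |x| ≤ α →
      ∑' k, G' k x = ∑' k : ℕ, (h (k + 1) - h k) * poiPMF x k := by
    intro x hx
    have P1 : Summable fun k => h k * poiPMF x k := by
      apply Summable.of_norm_bounded (S2.mul_left (Real.exp α))
      intro k
      rw [Real.norm_eq_abs, abs_mul]
      calc |h k| * |poiPMF x k| ≤ |h k| * (Real.exp α * q k) :=
            mul_le_mul_of_nonneg_left (hpb x hx k) (abs_nonneg _)
        _ = Real.exp α * (|h k| * q k) := by ring
    have P2 : Summable fun k => h (k + 1) * poiPMF x k := by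
      apply Summable.of_norm_bounded (S3.mul_left (Real.exp α))
      intro k
      rw [Real.norm_eq_abs, abs_mul]
      calc |h (k + 1)| * |poiPMF x k| ≤ |h (k + 1)| * (Real.exp α * q k) :=
            mul_le_mul_of_nonneg_left (hpb x hx k) (abs_nonneg _)
        _ = Real.exp α * (|h (k + 1)| * q k) := by ring
    have PA : Summable fun k : ℕ => h k * (if k = 0 then 0 else poiPMF x (k - 1)) := by
      apply (summable_nat_add_iff 1).1
      simpa using P2
    have hGdecomp : ∀ k, G' k x
        = h k * (if k = 0 then 0 else poiPMF x (k - 1)) - h k * poiPMF x k := by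
      intro k; simp only [hG', mul_sub]
    have hPA : ∑' k : ℕ, h k * (if k = 0 then 0 else poiPMF x (k - 1))
        = ∑' k, h (k + 1) * poiPMF x k := by
      rw [Summable.tsum_eq_zero_add PA]
      simp
    calc ∑' k, G' k x
        = ∑' k : ℕ, (h k * (if k = 0 then 0 else poiPMF x (k - 1)) - h k * poiPMF x k) :=
          tsum_congr hGdecomp
      _ = (∑' k : ℕ, h k * (if k = 0 then 0 else poiPMF x (k - 1)))
          - ∑' k, h k * poiPMF x k := Summable.tsum_sub PA P1
      _ = (∑' k, h (k + 1) * poiPMF x k) - ∑' k, h k * poiPMF x k := by rw [hPA]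
      _ = ∑' k : ℕ, (h (k + 1) - h k) * poiPMF x k := by
          rw [← Summable.tsum_sub P2 P1]
          exact tsum_congr fun k => by ring
  constructor
  · intro x hx
    rcases eq_or_lt_of_le hx.2 with heq | hxlt
    · subst heq
      apply HasDerivWithinAt.mono _ Set.Icc_subset_Iic_self
      apply hasDerivWithinAt_Iic_of_tendsto_deriv (s := Set.Ioo 0 x)
      · intro y hy
        exact (key y ⟨by linarith [hy.1], hy.2⟩).differentiableAt.differentiableWithinAt
      · exact (contf x (Set.right_mem_Icc.2 hx.1)).mono Set.Ioo_subset_Icc_self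
      · exact Ioo_mem_nhdsLT_of_mem ⟨hα, le_refl x⟩
      · have hg : Tendsto (fun y : ℝ => ∑' k : ℕ, (h (k + 1) - h k) * poiPMF y k) (𝓝[<] x)
            (𝓝 (∑' k : ℕ, (h (k + 1) - h k) * poiPMF x k)) := by
          have hc := (contg x (Set.right_mem_Icc.2 hx.1)).tendsto
          exact hc.mono_left
            (le_trans (nhdsWithin_le_of_mem (Ioo_mem_nhdsLT_of_mem ⟨hα, le_refl x⟩))
              (nhdsWithin_mono x Set.Ioo_subset_Icc_self))
        apply hg.congr'
        apply Filter.eventuallyEq_of_mem (Ioo_mem_nhdsLT_of_mem ⟨hα, le_refl x⟩)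
        intro y hy
        have hyt : y ∈ t := ⟨by linarith [hy.1], hy.2⟩
        show ∑' k : ℕ, (h (k + 1) - h k) * poiPMF y k
          = deriv (fun z : ℝ => ∑' k : ℕ, h k * poiPMF z k) y
        rw [← hGsum y (abs_le.2 ⟨by linarith [hy.1], hy.2.le⟩)]
        exact ((key y hyt).deriv).symm
    · have hxt : x ∈ t := ⟨by linarith [hx.1], hxlt⟩
      have hkx := key x hxt
      rw [hGsum x (habsx x hx)] at hkx
      exact hkx.hasDerivWithinAt
  · exact contg
end

section
/- Consider a nonatomic congestion game on a finite resource set E with weakly increasing, differentiable costs c_e satisfying c_e'(x) ≥ β > 0 on [0, α], total demand d_tot ≤ α, and a Wardrop equilibrium (ŷ, x̂). If (y, x) is a feasible flow-load pair that is an ε-approximate Wardrop equilibrium, then the Euclidean distance of the load vectors satisfies ‖x - x̂‖₂ ≤ √(ε α / β). -/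
open scoped BigOperators Classical

variable {E T : Type*}

/-- A feasible flow-load pair for a nonatomic congestion game with strategy sets `strat` and
demands `d`: flows are nonnegative, supported on feasible strategies, route the demand of each
type, and induce the resource loads `x`. -/
def Feasible [Fintype E] [Fintype T] (strat : T → Finset (Finset E)) (d : T → ℝ)
    (y : T → Finset E → ℝ) (x : E → ℝ) : Prop :=
  (∀ t s, 0 ≤ y t s) ∧ (∀ t s, s ∉ strat t → y t s = 0) ∧
  (∀ t, d t = ∑ s ∈ strat t, y t s) ∧
  (∀ e, x e = ∑ t, ∑ s ∈ strat t, if e ∈ s then y t s else 0)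

/-- An `ε`-approximate Wardrop equilibrium: a feasible flow-load pair such that every used
strategy has cost within `ε` of the minimum. A Wardrop equilibrium is the case `ε = 0`. -/
def IsEpsWE [Fintype E] [Fintype T] (strat : T → Finset (Finset E)) (c : E → ℝ → ℝ)
    (d : T → ℝ) (ε : ℝ) (y : T → Finset E → ℝ) (x : E → ℝ) : Prop :=
  Feasible strat d y x ∧
  ∀ t, ∀ s ∈ strat t, ∀ s' ∈ strat t, 0 < y t s →
    ∑ e ∈ s, c e (x e) ≤ (∑ e ∈ s', c e (x e)) + ε

lemma lemA_s9 [Fintype E] [Fintype T] (strat : T → Finset (Finset E)) (d : T → ℝ)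
    (y : T → Finset E → ℝ) (x : E → ℝ) (h : Feasible strat d y x) (w : E → ℝ) :
    ∑ e, w e * x e = ∑ t, ∑ s ∈ strat t, y t s * ∑ e ∈ s, w e := by
  calc ∑ e, w e * x e
      = ∑ e, ∑ t, ∑ s ∈ strat t, (if e ∈ s then w e * y t s else 0) := by
        refine Finset.sum_congr rfl fun e _ => ?_
        rw [h.2.2.2 e, Finset.mul_sum]
        exact Finset.sum_congr rfl fun t _ => by rw [Finset.mul_sum]; exact Finset.sum_congr rfl fun s _ => by split <;> simp
    _ = ∑ t, ∑ s ∈ strat t, ∑ e, (if e ∈ s then w e * y t s else 0) := by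
        rw [Finset.sum_comm]
        exact Finset.sum_congr rfl fun t _ => Finset.sum_comm
    _ = ∑ t, ∑ s ∈ strat t, y t s * ∑ e ∈ s, w e := by
        refine Finset.sum_congr rfl fun t _ => Finset.sum_congr rfl fun s _ => ?_
        rw [Finset.sum_ite_mem, Finset.univ_inter, Finset.mul_sum]
        exact Finset.sum_congr rfl fun e _ => mul_comm _ _

lemma lemB [Fintype E] [Fintype T] (strat : T → Finset (Finset E)) (c : E → ℝ → ℝ)
    (d : T → ℝ) (ε : ℝ) (hε : 0 ≤ ε)
    (y : T → Finset E → ℝ) (x : E → ℝ) (hap : IsEpsWE strat c d ε y x)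
    (y' : T → Finset E → ℝ) (x' : E → ℝ) (hfe' : Feasible strat d y' x') :
    ∑ e, c e (x e) * x e ≤ (∑ e, c e (x e) * x' e) + ε * ∑ t, d t := by
  obtain ⟨hfe, heq⟩ := hap
  rw [lemA_s9 strat d y x hfe (fun e => c e (x e)),
      lemA_s9 strat d y' x' hfe' (fun e => c e (x e)), Finset.mul_sum, ← Finset.sum_add_distrib]
  refine Finset.sum_le_sum fun t _ => ?_
  rcases Finset.eq_empty_or_nonempty (strat t) with hem | hne
  · have hdt : d t = 0 := by rw [hfe.2.2.1 t, hem, Finset.sum_empty]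
    simp [hem, hdt]
  · obtain ⟨s0, hs0, hmin⟩ := Finset.exists_min_image (strat t)
      (fun s => ∑ e ∈ s, c e (x e)) hne
    have step1 : ∑ s ∈ strat t, y t s * ∑ e ∈ s, c e (x e)
        ≤ ∑ s ∈ strat t, y t s * ((∑ e ∈ s0, c e (x e)) + ε) := by
      refine Finset.sum_le_sum fun s hs => ?_
      rcases lt_or_eq_of_le (hfe.1 t s) with hpos | hzero
      · exact mul_le_mul_of_nonneg_left (heq t s hs s0 hs0 hpos) (le_of_lt hpos)
      · simp [← hzero]
    have step2 : ∑ s ∈ strat t, y t s * ((∑ e ∈ s0, c e (x e)) + ε)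
        = d t * (∑ e ∈ s0, c e (x e)) + ε * d t := by
      rw [← Finset.sum_mul, ← hfe.2.2.1 t]; ring
    have step3 : d t * (∑ e ∈ s0, c e (x e))
        ≤ ∑ s ∈ strat t, y' t s * ∑ e ∈ s, c e (x e) := by
      rw [hfe'.2.2.1 t, Finset.sum_mul]
      exact Finset.sum_le_sum fun s hs =>
        mul_le_mul_of_nonneg_left (hmin s hs) (hfe'.1 t s)
    linarith

lemma strongmono (c : E → ℝ → ℝ) (α β : ℝ) (hβ : 0 < β)
    (hderiv : ∀ e, ∀ z ∈ Set.Icc (0 : ℝ) α,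
      ∃ dz, HasDerivWithinAt (c e) dz (Set.Icc 0 α) z ∧ β ≤ dz)
    (e : E) {a b : ℝ} (ha : a ∈ Set.Icc (0:ℝ) α) (hb : b ∈ Set.Icc (0:ℝ) α) :
    β * (b - a) ^ 2 ≤ (c e b - c e a) * (b - a) := by
  -- key: for u ≤ v in Icc, β * (v - u) ≤ c e v - c e u
  have key : ∀ u ∈ Set.Icc (0:ℝ) α, ∀ v ∈ Set.Icc (0:ℝ) α, u ≤ v →
      β * (v - u) ≤ c e v - c e u := by
    intro u hu v hv huv
    set g : ℝ → ℝ := fun z => c e z - β * z with hg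
    have hmonog : MonotoneOn g (Set.Icc 0 α) := by
      apply monotoneOn_of_deriv_nonneg (convex_Icc 0 α)
      · intro z hz
        obtain ⟨dz, hdz, _⟩ := hderiv e z hz
        exact (hdz.sub ((hasDerivWithinAt_id z _).const_mul β)).continuousWithinAt
      · intro z hz
        rw [interior_Icc] at hz
        obtain ⟨dz, hdz, _⟩ := hderiv e z (Set.mem_Icc_of_Ioo hz)
        have : HasDerivAt (c e) dz z := hdz.hasDerivAt (Icc_mem_nhds hz.1 hz.2)
        exact ((this.sub ((hasDerivAt_id z).const_mul β)).differentiableAt).differentiableWithinAt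
      · intro z hz
        rw [interior_Icc] at hz
        obtain ⟨dz, hdz, hβdz⟩ := hderiv e z (Set.mem_Icc_of_Ioo hz)
        have hca : HasDerivAt (c e) dz z := hdz.hasDerivAt (Icc_mem_nhds hz.1 hz.2)
        have hga : HasDerivAt g (dz - β) z := by
          have h2 := hca.sub ((hasDerivAt_id z).const_mul β)
          rw [mul_one] at h2
          exact h2
        rw [hga.deriv]; linarith
    have := hmonog hu hv huv
    simp only [hg] at this
    linarith
  rcases le_total a b with hab | hab
  · have := key a ha b hb hab
    have hnn : (0:ℝ) ≤ b - a := by linarith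
    calc β * (b - a) ^ 2 = (β * (b - a)) * (b - a) := by ring
      _ ≤ (c e b - c e a) * (b - a) := mul_le_mul_of_nonneg_right this hnn
  · have := key b hb a ha hab
    have hnn : (0:ℝ) ≤ a - b := by linarith
    calc β * (b - a) ^ 2 = (β * (a - b)) * (a - b) := by ring
      _ ≤ (c e a - c e b) * (a - b) := mul_le_mul_of_nonneg_right this hnn
      _ = (c e b - c e a) * (b - a) := by ring

/-- If `(yhat, xhat)` is a Wardrop equilibrium of a nonatomic congestion game with weakly increasing
differentiable costs with `c_e' ≥ β > 0` on `[0, α]` and total demand at most `α`, and `(y, x)`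
is a feasible `ε`-approximate Wardrop equilibrium, then `‖x - xhat‖₂ ≤ √(ε α / β)`. -/
theorem stmt9 [Fintype E] [Fintype T]
    (strat : T → Finset (Finset E)) (c : E → ℝ → ℝ) (d : T → ℝ)
    (α β ε : ℝ) (hβ : 0 < β) (hε : 0 ≤ ε)
    (hcpos : ∀ e z, 0 ≤ z → 0 ≤ c e z)
    (hd : ∀ t, 0 ≤ d t) (hdtot : ∑ t, d t ≤ α)
    (hmono : ∀ e, MonotoneOn (c e) (Set.Icc 0 α))
    (hderiv : ∀ e, ∀ z ∈ Set.Icc (0 : ℝ) α,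
      ∃ dz, HasDerivWithinAt (c e) dz (Set.Icc 0 α) z ∧ β ≤ dz)
    (yhat : T → Finset E → ℝ) (xhat : E → ℝ) (hWE : IsEpsWE strat c d 0 yhat xhat)
    (y : T → Finset E → ℝ) (x : E → ℝ) (hap : IsEpsWE strat c d ε y x) :
    Real.sqrt (∑ e, (x e - xhat e) ^ 2) ≤ Real.sqrt (ε * α / β) := by
  have hbound : ∀ (y' : T → Finset E → ℝ) (x' : E → ℝ), Feasible strat d y' x' →
      ∀ e, x' e ∈ Set.Icc (0:ℝ) α := by
    intro y' x' hfe e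
    constructor
    · rw [hfe.2.2.2 e]
      refine Finset.sum_nonneg fun t _ => Finset.sum_nonneg fun s _ => ?_
      split
      · exact hfe.1 t s
      · exact le_refl 0
    · calc x' e ≤ ∑ t, d t := by
            rw [hfe.2.2.2 e]
            refine Finset.sum_le_sum fun t _ => ?_
            rw [hfe.2.2.1 t]
            refine Finset.sum_le_sum fun s _ => ?_
            split
            · exact le_refl _
            · exact hfe.1 t s
        _ ≤ α := hdtot
  have hx := hbound y x hap.1
  have hxhat := hbound yhat xhat hWE.1
  have hB1 := lemB strat c d ε hε y x hap yhat xhat hWE.1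
  have hB2 := lemB strat c d 0 le_rfl yhat xhat hWE y x hap.1
  have hsum : ∑ e, β * (x e - xhat e) ^ 2 ≤ ε * α := by
    calc ∑ e, β * (x e - xhat e) ^ 2
        ≤ ∑ e, (c e (x e) - c e (xhat e)) * (x e - xhat e) :=
          Finset.sum_le_sum fun e _ =>
            strongmono c α β hβ hderiv e (hxhat e) (hx e)
      _ = (∑ e, c e (x e) * x e) - (∑ e, c e (x e) * xhat e)
          - ((∑ e, c e (xhat e) * x e) - (∑ e, c e (xhat e) * xhat e)) := by
          rw [← Finset.sum_sub_distrib, ← Finset.sum_sub_distrib, ← Finset.sum_sub_distrib]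
          exact Finset.sum_congr rfl fun e _ => by ring
      _ ≤ ε * ∑ t, d t := by linarith
      _ ≤ ε * α := mul_le_mul_of_nonneg_left hdtot hε
  rw [← Finset.mul_sum] at hsum
  apply Real.sqrt_le_sqrt
  rw [div_eq_mul_inv, ← mul_le_mul_iff_right₀ hβ]
  calc β * ∑ e, (x e - xhat e) ^ 2 ≤ ε * α := hsum
    _ = β * (ε * α * β⁻¹) := by field_simp
end

section
/- Let Γⁿ be a sequence of weighted congestion games with |Nⁿ| → ∞, max weight wⁿ → 0, and per-type aggregate demands dⁿ_t → d_t. Then for any sequence of mixed Nash equilibria σ̂ⁿ, the expected flow-load pairs (ŷⁿ, x̂ⁿ) are bounded, every accumulation point (ŷ, x̂) is a Wardrop equilibrium of the nonatomic game with demands (d_t), and along any convergent subsequence the random flow-load pairs (Yⁿ, Xⁿ) converge in distribution to the constant (ŷ, x̂). -/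
open scoped BigOperators Classical
open Filter Topology

section Defs

variable {E T N : Type*}

/-- Expectation of `g` under the product measure where each player `i` independently draws a
pure strategy according to the mixed strategy `σ i`. -/
noncomputable def expVal [Fintype E] [Fintype N] (σ : N → Finset E → ℝ)
    (g : (N → Finset E) → ℝ) : ℝ :=
  ∑ a : N → Finset E, (∏ i, σ i (a i)) * g a

/-- The random resource load `X_e = ∑ i w_i 1{e ∈ S_i}`. -/
noncomputable def loadW [Fintype E] [Fintype N] (w : N → ℝ) (e : E)
    (a : N → Finset E) : ℝ :=
  ∑ i, if e ∈ a i then w i else 0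

/-- The conditional load `X_{i,e} = w_i + ∑_{j ≠ i} w_j 1{e ∈ S_j}` seen by player `i` on
resource `e`. -/
noncomputable def loadWi [Fintype E] [Fintype N] (w : N → ℝ) (i : N) (e : E)
    (a : N → Finset E) : ℝ :=
  w i + ∑ j, if j ≠ i ∧ e ∈ a j then w j else 0

/-- The random strategy flow `Y_{t,s} = ∑_{i : t_i = t} w_i 1{S_i = s}`. -/
noncomputable def flowW [Fintype E] [Fintype N] (w : N → ℝ) (tm : N → T) (t : T)
    (s : Finset E) (a : N → Finset E) : ℝ :=
  ∑ i, if tm i = t ∧ a i = s then w i else 0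

/-- `σ` is a mixed strategy profile: each `σ i` is a probability distribution over the
strategy set of player `i`'s type. -/
def IsMixed [Fintype E] (strat : T → Finset (Finset E)) (tm : N → T)
    (σ : N → Finset E → ℝ) : Prop :=
  (∀ i s, 0 ≤ σ i s) ∧ (∀ i s, s ∉ strat (tm i) → σ i s = 0) ∧
  (∀ i, ∑ s ∈ strat (tm i), σ i s = 1)

/-- Mixed Nash equilibrium of a weighted congestion game. -/
def IsMNE [Fintype E] [Fintype N] (strat : T → Finset (Finset E)) (c : E → ℝ → ℝ)
    (w : N → ℝ) (tm : N → T) (σ : N → Finset E → ℝ) : Prop :=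
  IsMixed strat tm σ ∧
  ∀ i, ∀ s ∈ strat (tm i), ∀ s' ∈ strat (tm i), 0 < σ i s →
    expVal σ (fun a => ∑ e ∈ s, c e (loadWi w i e a)) ≤
      expVal σ (fun a => ∑ e ∈ s', c e (loadWi w i e a))

/-- A Wardrop equilibrium of the nonatomic game. -/
def IsWE [Fintype E] [Fintype T] (strat : T → Finset (Finset E)) (c : E → ℝ → ℝ)
    (d : T → ℝ) (y : T → Finset E → ℝ) (x : E → ℝ) : Prop :=
  Feasible strat d y x ∧
  ∀ t, ∀ s ∈ strat t, ∀ s' ∈ strat t, 0 < y t s →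
    ∑ e ∈ s, c e (x e) ≤ ∑ e ∈ s', c e (x e)

end Defs

set_option linter.unusedSectionVars false

section Aux

variable {E T N : Type*} [Fintype E] [Fintype N]
variable {strat : T → Finset (Finset E)} {tm : N → T} {σ : N → Finset E → ℝ}

lemma sum_sigma (hmix : IsMixed strat tm σ) (i : N) : ∑ s : Finset E, σ i s = 1 := by
  rw [← hmix.2.2 i]
  exact (Finset.sum_subset (Finset.subset_univ _) (fun s _ hs => hmix.2.1 i s hs)).symm

lemma prob_nonneg (hmix : IsMixed strat tm σ) (a : N → Finset E) :
    0 ≤ ∏ i, σ i (a i) :=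
  Finset.prod_nonneg fun i _ => hmix.1 i (a i)

lemma sum_prob (hmix : IsMixed strat tm σ) :
    ∑ a : N → Finset E, ∏ i, σ i (a i) = 1 := by
  rw [← Fintype.piFinset_univ, ← Finset.prod_univ_sum]
  simp [sum_sigma hmix]

lemma expVal_congr (hmix : IsMixed strat tm σ) {g h : (N → Finset E) → ℝ}
    (H : ∀ a, (∀ i, a i ∈ strat (tm i)) → g a = h a) : expVal σ g = expVal σ h := by
  refine Finset.sum_congr rfl fun a _ => ?_
  by_cases ha : ∀ i, a i ∈ strat (tm i)
  · rw [H a ha]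
  · push_neg at ha
    obtain ⟨i, hi⟩ := ha
    rw [Finset.prod_eq_zero (Finset.mem_univ i) (hmix.2.1 i (a i) hi), zero_mul, zero_mul]

lemma expVal_const (hmix : IsMixed strat tm σ) (r : ℝ) : expVal σ (fun _ => r) = r := by
  unfold expVal
  rw [← Finset.sum_mul, sum_prob hmix, one_mul]

lemma expVal_add (g h : (N → Finset E) → ℝ) :
    expVal σ (fun a => g a + h a) = expVal σ g + expVal σ h := by
  unfold expVal; rw [← Finset.sum_add_distrib]; congr 1; ext a; ring

lemma expVal_sub (g h : (N → Finset E) → ℝ) :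
    expVal σ (fun a => g a - h a) = expVal σ g - expVal σ h := by
  unfold expVal; rw [← Finset.sum_sub_distrib]; congr 1; ext a; ring

lemma expVal_sum {ι : Type*} (u : Finset ι) (g : ι → (N → Finset E) → ℝ) :
    expVal σ (fun a => ∑ e ∈ u, g e a) = ∑ e ∈ u, expVal σ (g e) := by
  unfold expVal; rw [Finset.sum_comm]
  exact Finset.sum_congr rfl fun a _ => by rw [Finset.mul_sum]

lemma expVal_mono (hmix : IsMixed strat tm σ) {g h : (N → Finset E) → ℝ}
    (H : ∀ a, g a ≤ h a) : expVal σ g ≤ expVal σ h :=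
  Finset.sum_le_sum fun a _ => mul_le_mul_of_nonneg_left (H a) (prob_nonneg hmix a)

lemma expVal_abs_le (hmix : IsMixed strat tm σ) {g : (N → Finset E) → ℝ} {B : ℝ}
    (H : ∀ a, |g a| ≤ B) : |expVal σ g| ≤ B := by
  rw [abs_le]
  constructor
  · have := expVal_mono hmix (g := fun _ => -B) (h := g) (fun a => neg_le_of_abs_le (H a))
    rwa [expVal_const hmix] at this
  · have := expVal_mono hmix (g := g) (h := fun _ => B) (fun a => le_of_abs_le (H a))
    rwa [expVal_const hmix] at this

lemma expVal_nonneg (hmix : IsMixed strat tm σ) {g : (N → Finset E) → ℝ}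
    (H : ∀ a, 0 ≤ g a) : 0 ≤ expVal σ g := by
  have := expVal_mono hmix (g := fun _ => (0:ℝ)) (h := g) H
  rwa [expVal_const hmix] at this

lemma expVal_prod (u : N → Finset E → ℝ) :
    expVal σ (fun a => ∏ i, u i (a i)) = ∏ i, ∑ s : Finset E, σ i s * u i s := by
  unfold expVal
  rw [Finset.prod_univ_sum, Fintype.piFinset_univ]
  exact Finset.sum_congr rfl fun a _ => by rw [← Finset.prod_mul_distrib]

lemma expVal_apply (hmix : IsMixed strat tm σ) (i : N) (f : Finset E → ℝ) :
    expVal σ (fun a => f (a i)) = ∑ s : Finset E, σ i s * f s := by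
  have h := expVal_prod (σ := σ) (fun j => if j = i then f else fun _ => 1)
  have h1 : (fun a : N → Finset E => ∏ j, (if j = i then f else fun _ => (1:ℝ)) (a j))
      = fun a => f (a i) := by
    funext a
    rw [Finset.prod_eq_single i (fun j _ hj => by simp [hj]) (by simp)]
    simp
  have h2 : ∏ j, ∑ s : Finset E, σ j s * (if j = i then f else fun _ => (1:ℝ)) s
      = ∑ s : Finset E, σ i s * f s := by
    rw [Finset.prod_eq_single i (fun j _ hj => by simp [hj, sum_sigma hmix]) (by simp)]
    simp
  rw [h1, h2] at h
  exact h

lemma expVal_mul_apply (hmix : IsMixed strat tm σ) {i j : N} (hij : i ≠ j)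
    (f g : Finset E → ℝ) :
    expVal σ (fun a => f (a i) * g (a j)) =
      (∑ s : Finset E, σ i s * f s) * (∑ s : Finset E, σ j s * g s) := by
  set u : N → Finset E → ℝ := fun k => if k = i then f else if k = j then g else fun _ => 1
    with hu
  have h := expVal_prod (σ := σ) u
  have key : ∀ (v : N → ℝ), (∀ k, k ≠ i → k ≠ j → v k = 1) → ∏ k, v k = v i * v j := by
    intro v hv
    rw [← Finset.prod_pair hij]
    exact (Finset.prod_subset (Finset.subset_univ _) (fun k _ hk => by
      simp only [Finset.mem_insert, Finset.mem_singleton, not_or] at hk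
      exact hv k hk.1 hk.2)).symm
  have h1 : (fun a : N → Finset E => ∏ k, u k (a k)) = fun a => f (a i) * g (a j) := by
    funext a
    rw [key (fun k => u k (a k)) (fun k hk1 hk2 => by simp [hu, hk1, hk2])]
    simp [hu, hij, hij.symm]
  have h2 : ∏ k, ∑ s : Finset E, σ k s * u k s
      = (∑ s : Finset E, σ i s * f s) * (∑ s : Finset E, σ j s * g s) := by
    rw [key _ (fun k hk1 hk2 => by simp [hu, hk1, hk2, sum_sigma hmix])]
    simp [hu, hij, hij.symm]
  rw [h1, h2] at h
  exact h

end Aux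
section Aux2

set_option linter.unusedSectionVars false

variable {E T N : Type*} [Fintype E] [Fintype N]
variable {strat : T → Finset (Finset E)} {tm : N → T} {σ : N → Finset E → ℝ}

/-- Variance bound for sums of independent bounded terms. -/
lemma expVal_var_le (hmix : IsMixed strat tm σ) {w : N → ℝ} (hw : ∀ i, 0 ≤ w i)
    (u : N → Finset E → ℝ) (hu0 : ∀ i s, 0 ≤ u i s) (hub : ∀ i s, u i s ≤ w i) :
    expVal σ (fun a => (∑ i, u i (a i) - expVal σ (fun a => ∑ i, u i (a i)))^2)
      ≤ ∑ i, (w i)^2 := by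
  set m : N → ℝ := fun i => ∑ s : Finset E, σ i s * u i s with hm
  have hmean : expVal σ (fun a => ∑ i, u i (a i)) = ∑ i, m i := by
    rw [expVal_sum Finset.univ (fun i a => u i (a i))]
    exact Finset.sum_congr rfl fun i _ => expVal_apply hmix i (u i)
  have hmsum : ∀ i, ∑ s : Finset E, σ i s * (u i s - m i) = 0 := by
    intro i
    simp only [mul_sub]
    rw [Finset.sum_sub_distrib, ← Finset.sum_mul, sum_sigma hmix, one_mul, sub_self]
  have hexp : expVal σ (fun a => (∑ i, u i (a i) - expVal σ (fun a => ∑ i, u i (a i)))^2)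
      = ∑ i, expVal σ (fun a => (u i (a i) - m i)^2) := by
    rw [hmean]
    have hptw : (fun a : N → Finset E => (∑ i, u i (a i) - ∑ i, m i)^2)
        = fun a => ∑ i, ∑ j, (u i (a i) - m i) * (u j (a j) - m j) := by
      funext a
      rw [← Finset.sum_sub_distrib, sq, Finset.sum_mul_sum]
    rw [hptw]
    rw [expVal_sum Finset.univ (fun i a => ∑ j, (u i (a i) - m i) * (u j (a j) - m j))]
    refine Finset.sum_congr rfl fun i _ => ?_
    rw [expVal_sum Finset.univ (fun j a => (u i (a i) - m i) * (u j (a j) - m j))]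
    rw [Finset.sum_eq_single i]
    · congr 1; funext a; rw [sq]
    · intro j _ hji
      rw [expVal_mul_apply hmix (Ne.symm hji) (fun s => u i s - m i) (fun s => u j s - m j),
        hmsum i, zero_mul]
    · intro h; exact absurd (Finset.mem_univ i) h
  rw [hexp]
  refine Finset.sum_le_sum fun i _ => ?_
  have hmb : 0 ≤ m i ∧ m i ≤ w i := by
    constructor
    · exact Finset.sum_nonneg fun s _ => mul_nonneg (hmix.1 i s) (hu0 i s)
    · calc ∑ s : Finset E, σ i s * u i s ≤ ∑ s : Finset E, σ i s * w i :=
            Finset.sum_le_sum fun s _ => mul_le_mul_of_nonneg_left (hub i s) (hmix.1 i s)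
        _ = w i := by rw [← Finset.sum_mul, sum_sigma hmix, one_mul]
  have hb : ∀ a : N → Finset E, (u i (a i) - m i)^2 ≤ (w i)^2 := by
    intro a
    have h1 : |u i (a i) - m i| ≤ w i := by
      rw [abs_sub_le_iff]
      constructor
      · linarith [hub i (a i), hmb.1]
      · linarith [hu0 i (a i), hmb.2]
    calc (u i (a i) - m i)^2 = |u i (a i) - m i|^2 := (sq_abs _).symm
      _ ≤ (w i)^2 := by
          apply sq_le_sq' <;> [linarith [abs_nonneg (u i (a i) - m i)]; exact h1]
  have := expVal_mono hmix (g := fun a => (u i (a i) - m i)^2) (h := fun _ => (w i)^2) hb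
  rwa [expVal_const hmix] at this

/-- Concentration estimate: expectation of a UC bounded function of a concentrated variable. -/
lemma expVal_comp_close (hmix : IsMixed strat tm σ)
    (Z : (N → Finset E) → ℝ) (g : ℝ → ℝ) {v ε δ C : ℝ}
    (hδ : 0 < δ) (hC : ∀ z, |g z| ≤ C)
    (hUC : ∀ z₁ z₂ : ℝ, |z₁ - z₂| < δ → |g z₁ - g z₂| ≤ ε)
    (hvar : expVal σ (fun a => (Z a - expVal σ Z)^2) ≤ v) :
    |expVal σ (fun a => g (Z a)) - g (expVal σ Z)| ≤ ε + 2*C*v/δ^2 := by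
  set m := expVal σ Z with hm
  have hC0 : 0 ≤ C := le_trans (abs_nonneg _) (hC 0)
  have hptw : ∀ a, |g (Z a) - g m| ≤ ε + (2*C/δ^2) * (Z a - m)^2 := by
    intro a
    have hε0 : 0 ≤ ε := le_trans (abs_nonneg _) (hUC m m (by simpa using hδ))
    by_cases h : |Z a - m| < δ
    · have := hUC (Z a) m h
      nlinarith [sq_nonneg (Z a - m), div_nonneg (by linarith : (0:ℝ) ≤ 2*C) (sq_nonneg δ)]
    · push_neg at h
      have h2 : δ^2 ≤ (Z a - m)^2 := by
        calc δ^2 ≤ |Z a - m|^2 := by apply sq_le_sq' <;> linarith [abs_nonneg (Z a - m)]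
          _ = (Z a - m)^2 := sq_abs _
      have h3 : 2*C ≤ (2*C/δ^2) * (Z a - m)^2 := by
        rw [div_mul_eq_mul_div, le_div_iff₀ (by positivity)]
        nlinarith
      have h4 : |g (Z a) - g m| ≤ 2*C := by
        calc |g (Z a) - g m| ≤ |g (Z a)| + |g m| := abs_sub _ _
          _ ≤ 2*C := by linarith [hC (Z a), hC m]
      linarith
  have key : |expVal σ (fun a => g (Z a)) - g m| ≤ ε + (2*C/δ^2) * expVal σ (fun a => (Z a - m)^2) := by
    have h1 : expVal σ (fun a => g (Z a)) - g m = expVal σ (fun a => g (Z a) - g m) := by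
      rw [expVal_sub, expVal_const hmix]
    rw [h1]
    have h2 : expVal σ (fun a => ε + (2*C/δ^2) * (Z a - m)^2)
        = ε + (2*C/δ^2) * expVal σ (fun a => (Z a - m)^2) := by
      rw [expVal_add (fun _ => ε) (fun a => (2*C/δ^2) * (Z a - m)^2), expVal_const hmix]
      congr 1
      unfold expVal
      rw [Finset.mul_sum]
      exact Finset.sum_congr rfl fun a _ => by ring
    calc |expVal σ (fun a => g (Z a) - g m)| ≤ expVal σ (fun a => |g (Z a) - g m|) := by
          rw [abs_le]
          constructor
          · have := expVal_mono hmix (g := fun a => -|g (Z a) - g m|) (h := fun a => g (Z a) - g m)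
              (fun a => neg_abs_le _)
            have h3 : expVal σ (fun a => -|g (Z a) - g m|) = - expVal σ (fun a => |g (Z a) - g m|) := by
              have := expVal_sub (σ := σ) (fun _ => (0:ℝ)) (fun a => |g (Z a) - g m|)
              simp only [zero_sub] at this
              rw [this, expVal_const hmix]; ring
            linarith
          · exact expVal_mono hmix fun a => le_abs_self _
      _ ≤ expVal σ (fun a => ε + (2*C/δ^2) * (Z a - m)^2) := expVal_mono hmix hptw
      _ = ε + (2*C/δ^2) * expVal σ (fun a => (Z a - m)^2) := h2
  have hvnn : 0 ≤ expVal σ (fun a => (Z a - m)^2) := expVal_nonneg hmix fun a => sq_nonneg _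
  calc |expVal σ (fun a => g (Z a)) - g m| ≤ ε + (2*C/δ^2) * expVal σ (fun a => (Z a - m)^2) := key
    _ ≤ ε + (2*C/δ^2) * v := by
        have : (0:ℝ) ≤ 2*C/δ^2 := by positivity
        nlinarith
    _ = ε + 2*C*v/δ^2 := by ring

end Aux2
section Aux3

set_option linter.unusedSectionVars false

variable {E T N : Type*} [Fintype E] [Fintype N]
variable {strat : T → Finset (Finset E)} {tm : N → T} {σ : N → Finset E → ℝ} {w : N → ℝ}

lemma loadW_nonneg (hw : ∀ i, 0 ≤ w i) (e : E) (a : N → Finset E) : 0 ≤ loadW w e a :=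
  Finset.sum_nonneg fun i _ => by split <;> [exact hw i; exact le_rfl]

lemma loadW_le (hw : ∀ i, 0 ≤ w i) (e : E) (a : N → Finset E) : loadW w e a ≤ ∑ i, w i :=
  Finset.sum_le_sum fun i _ => by split <;> [exact le_rfl; exact hw i]

lemma flowW_nonneg (hw : ∀ i, 0 ≤ w i) (t : T) (s : Finset E) (a : N → Finset E) :
    0 ≤ flowW w tm t s a :=
  Finset.sum_nonneg fun i _ => by split <;> [exact hw i; exact le_rfl]

lemma flowW_le (hw : ∀ i, 0 ≤ w i) (t : T) (s : Finset E) (a : N → Finset E) :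
    flowW w tm t s a ≤ ∑ i, w i :=
  Finset.sum_le_sum fun i _ => by split <;> [exact le_rfl; exact hw i]

lemma loadWi_nonneg (hw : ∀ i, 0 ≤ w i) (i : N) (e : E) (a : N → Finset E) :
    0 ≤ loadWi w i e a :=
  add_nonneg (hw i) (Finset.sum_nonneg fun j _ => by split <;> [exact hw j; exact le_rfl])

lemma loadWi_le (hw : ∀ i, 0 ≤ w i) (i : N) (e : E) (a : N → Finset E) :
    loadWi w i e a ≤ ∑ j, w j := by
  unfold loadWi
  have : ∑ j, (if j ≠ i ∧ e ∈ a j then w j else 0) ≤ ∑ j, (if j ≠ i then w j else 0) := by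
    refine Finset.sum_le_sum fun j _ => ?_
    by_cases h1 : j ≠ i
    · by_cases h2 : e ∈ a j <;> simp [h1, h2, hw j]
    · simp [h1]
  have h2 : ∑ j, (if j ≠ i then w j else 0) = (∑ j, w j) - w i := by
    have hterm : ∀ j, (if j ≠ i then w j else 0) = w j - (if j = i then w j else 0) := by
      intro j; by_cases h : j = i <;> simp [h]
    simp_rw [hterm]
    rw [Finset.sum_sub_distrib, Finset.sum_ite_eq' Finset.univ i w]
    simp
  rw [h2] at this
  linarith

lemma loadWi_sub_loadW (i : N) (e : E) (a : N → Finset E) :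
    loadWi w i e a - loadW w e a = w i - (if e ∈ a i then w i else 0) := by
  unfold loadWi loadW
  have : ∑ j, (if j ≠ i ∧ e ∈ a j then w j else 0) - ∑ j, (if e ∈ a j then w j else 0)
      = - (if e ∈ a i then w i else 0) := by
    rw [← Finset.sum_sub_distrib]
    rw [Finset.sum_eq_single i]
    · simp
    · intro j _ hj
      by_cases h2 : e ∈ a j <;> simp [hj, h2]
    · intro h; exact absurd (Finset.mem_univ i) h
  linarith

lemma abs_loadWi_sub_loadW (hw : ∀ i, 0 ≤ w i) (i : N) (e : E) (a : N → Finset E) :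
    |loadWi w i e a - loadW w e a| ≤ w i := by
  rw [loadWi_sub_loadW]
  rw [abs_le]
  by_cases h : e ∈ a i <;> simp [h, hw i]

end Aux3
section Aux4

set_option linter.unusedSectionVars false

variable {E T N : Type*} [Fintype E] [Fintype N] [Fintype T]
variable {strat : T → Finset (Finset E)} {tm : N → T} {σ : N → Finset E → ℝ} {w : N → ℝ}

lemma support_load_eq_flow {a : N → Finset E} (ha : ∀ i, a i ∈ strat (tm i)) (e : E) :
    loadW w e a = ∑ t, ∑ s ∈ strat t, (if e ∈ s then flowW w tm t s a else 0) := by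
  have key : ∀ i, ∑ t, ∑ s ∈ strat t, (if e ∈ s ∧ tm i = t ∧ a i = s then w i else 0)
      = if e ∈ a i then w i else 0 := by
    intro i
    rw [Finset.sum_eq_single (tm i)]
    · rw [Finset.sum_eq_single_of_mem (a i) (ha i)]
      · by_cases h : e ∈ a i <;> simp [h]
      · intro s _ hne
        exact if_neg (by tauto)
    · intro t _ ht
      exact Finset.sum_eq_zero fun s _ => if_neg (by tauto)
    · intro h; exact absurd (Finset.mem_univ _) h
  symm
  calc ∑ t, ∑ s ∈ strat t, (if e ∈ s then flowW w tm t s a else 0)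
      = ∑ t, ∑ s ∈ strat t, ∑ i, (if e ∈ s ∧ tm i = t ∧ a i = s then w i else 0) := by
        refine Finset.sum_congr rfl fun t _ => Finset.sum_congr rfl fun s _ => ?_
        unfold flowW
        by_cases h : e ∈ s
        · rw [if_pos h]
          exact Finset.sum_congr rfl fun i _ => by
            by_cases h2 : tm i = t ∧ a i = s <;> simp [h, h2]
        · rw [if_neg h]
          exact (Finset.sum_eq_zero fun i _ => by simp [h]).symm
    _ = ∑ t, ∑ i, ∑ s ∈ strat t, (if e ∈ s ∧ tm i = t ∧ a i = s then w i else 0) :=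
        Finset.sum_congr rfl fun t _ => Finset.sum_comm
    _ = ∑ i, ∑ t, ∑ s ∈ strat t, (if e ∈ s ∧ tm i = t ∧ a i = s then w i else 0) :=
        Finset.sum_comm
    _ = ∑ i, (if e ∈ a i then w i else 0) := Finset.sum_congr rfl fun i _ => key i
    _ = loadW w e a := rfl

lemma support_sum_flow {a : N → Finset E} (ha : ∀ i, a i ∈ strat (tm i)) (t : T) :
    ∑ s ∈ strat t, flowW w tm t s a = ∑ i, (if tm i = t then w i else 0) := by
  calc ∑ s ∈ strat t, flowW w tm t s a
      = ∑ s ∈ strat t, ∑ i, (if tm i = t ∧ a i = s then w i else 0) := rfl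
    _ = ∑ i, ∑ s ∈ strat t, (if tm i = t ∧ a i = s then w i else 0) := Finset.sum_comm
    _ = ∑ i, (if tm i = t then w i else 0) := by
        refine Finset.sum_congr rfl fun i _ => ?_
        by_cases h : tm i = t
        · have hai : a i ∈ strat t := h ▸ ha i
          rw [Finset.sum_eq_single_of_mem (a i) hai]
          · simp [h]
          · intro s _ hne; exact if_neg (by tauto)
        · rw [if_neg h]
          exact Finset.sum_eq_zero fun s _ => if_neg (by tauto)

lemma support_flow_zero {a : N → Finset E} (ha : ∀ i, a i ∈ strat (tm i)) {t : T}
    {s : Finset E} (hs : s ∉ strat t) : flowW w tm t s a = 0 := by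
  refine Finset.sum_eq_zero fun i _ => if_neg fun h => ?_
  exact hs (h.2 ▸ h.1 ▸ ha i)

lemma expVal_load_eq_flow (hmix : IsMixed strat tm σ) (e : E) :
    expVal σ (loadW w e)
      = ∑ t, ∑ s ∈ strat t, (if e ∈ s then expVal σ (flowW w tm t s) else 0) := by
  rw [expVal_congr hmix (h := fun a => ∑ t, ∑ s ∈ strat t, (if e ∈ s then flowW w tm t s a else 0))
    (fun a ha => support_load_eq_flow ha e)]
  rw [expVal_sum Finset.univ]
  refine Finset.sum_congr rfl fun t _ => ?_
  rw [expVal_sum (strat t)]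
  refine Finset.sum_congr rfl fun s _ => ?_
  by_cases h : e ∈ s
  · simp only [if_pos h]
  · simp only [if_neg h]
    exact expVal_const hmix 0

lemma expVal_sum_flow (hmix : IsMixed strat tm σ) (t : T) :
    ∑ s ∈ strat t, expVal σ (flowW w tm t s) = ∑ i, (if tm i = t then w i else 0) := by
  rw [← expVal_sum (strat t)]
  rw [expVal_congr hmix (h := fun _ => ∑ i, (if tm i = t then w i else 0))
    (fun a ha => support_sum_flow ha t)]
  exact expVal_const hmix _

lemma expVal_flow_zero (hmix : IsMixed strat tm σ) {t : T} {s : Finset E}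
    (hs : s ∉ strat t) : expVal σ (flowW w tm t s) = 0 := by
  rw [expVal_congr hmix (h := fun _ => (0:ℝ)) (fun a ha => support_flow_zero ha hs)]
  exact expVal_const hmix 0

lemma var_loadW (hmix : IsMixed strat tm σ) (hw : ∀ i, 0 ≤ w i) (e : E) :
    expVal σ (fun a => (loadW w e a - expVal σ (loadW w e))^2) ≤ ∑ i, (w i)^2 := by
  have := expVal_var_le hmix hw (fun i s => if e ∈ s then w i else 0)
    (fun i s => by split <;> [exact hw i; exact le_rfl])
    (fun i s => by split <;> [exact le_rfl; exact hw i])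
  exact this

lemma var_flowW (hmix : IsMixed strat tm σ) (hw : ∀ i, 0 ≤ w i) (t : T) (s : Finset E) :
    expVal σ (fun a => (flowW w tm t s a - expVal σ (flowW w tm t s))^2) ≤ ∑ i, (w i)^2 := by
  have := expVal_var_le hmix hw (fun i s' => if tm i = t ∧ s' = s then w i else 0)
    (fun i s' => by split <;> [exact hw i; exact le_rfl])
    (fun i s' => by split <;> [exact le_rfl; exact hw i])
  exact this

lemma sum_sq_le_of_lt {η : ℝ} (hw : ∀ i, 0 ≤ w i) (hη : ∀ i, w i < η) :
    ∑ i, (w i)^2 ≤ η * ∑ i, w i := by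
  rw [Finset.mul_sum]
  refine Finset.sum_le_sum fun i _ => ?_
  rw [sq]
  exact mul_le_mul_of_nonneg_right (le_of_lt (hη i)) (hw i)

end Aux4
section Clamp

/-- Clamp a real number to `[0, M]`. -/
noncomputable def clampTo (M z : ℝ) : ℝ := max 0 (min z M)

lemma clampTo_mem_Icc {M : ℝ} (hM : 0 ≤ M) (z : ℝ) : clampTo M z ∈ Set.Icc 0 M := by
  unfold clampTo
  constructor
  · exact le_max_left _ _
  · rw [max_le_iff]
    exact ⟨hM, min_le_right _ _⟩

lemma clampTo_eq_self {M z : ℝ} (h0 : 0 ≤ z) (hM : z ≤ M) : clampTo M z = z := by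
  unfold clampTo
  rw [min_eq_left hM, max_eq_right h0]

lemma abs_clampTo_sub_le (M a b : ℝ) : |clampTo M a - clampTo M b| ≤ |a - b| := by
  unfold clampTo
  calc |max 0 (min a M) - max 0 (min b M)|
      = |min a M ⊔ 0 - min b M ⊔ 0| := by rw [max_comm 0 _, max_comm 0 _]
    _ ≤ |min a M - min b M| := abs_max_sub_max_le_abs _ _ _
    _ ≤ |a - b| := by
        rw [min_comm a M, min_comm b M]
        cases abs_cases (a - b) with
        | inl h => cases le_total a M with
          | inl ha => cases le_total b M with
            | inl hb => simp [min_eq_right ha, min_eq_right hb]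
            | inr hb => rw [min_eq_right ha, min_eq_left hb, abs_sub_le_iff]
                        constructor <;> [skip; rw [abs_of_nonneg (by linarith)]] <;>
                          [rw [abs_of_nonneg (by linarith)]; skip] <;> linarith
          | inr ha => cases le_total b M with
            | inl hb => rw [min_eq_left ha, min_eq_right hb, abs_sub_le_iff]
                        rw [abs_of_nonneg (by linarith)]
                        constructor <;> linarith
            | inr hb => simp [min_eq_left ha, min_eq_left hb, abs_nonneg]
        | inr h => cases le_total a M with
          | inl ha => cases le_total b M with
            | inl hb => simp [min_eq_right ha, min_eq_right hb]
            | inr hb => rw [min_eq_right ha, min_eq_left hb]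
                        rw [abs_of_nonpos (by linarith), abs_of_nonpos (by linarith)]
                        linarith
          | inr ha => cases le_total b M with
            | inl hb => rw [min_eq_left ha, min_eq_right hb]
                        rw [abs_of_nonpos (by linarith), abs_of_nonpos (by linarith)]
                        linarith
            | inr hb => simp [min_eq_left ha, min_eq_left hb, abs_nonneg]

lemma clampTo_uc {M : ℝ} (hM : 0 ≤ M) {c : ℝ → ℝ} (hc : Continuous c) :
    ∀ ε > (0:ℝ), ∃ δ > (0:ℝ), ∀ a b : ℝ, |a - b| < δ →
      |c (clampTo M a) - c (clampTo M b)| ≤ ε := by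
  intro ε hε
  have huc := (isCompact_Icc (a := (0:ℝ)) (b := M)).uniformContinuousOn_of_continuous
    hc.continuousOn
  rw [Metric.uniformContinuousOn_iff] at huc
  obtain ⟨δ, hδ, hδ'⟩ := huc ε hε
  refine ⟨δ, hδ, fun a b hab => ?_⟩
  have := hδ' (clampTo M a) (clampTo_mem_Icc hM a) (clampTo M b) (clampTo_mem_Icc hM b)
    (by rw [Real.dist_eq]; exact lt_of_le_of_lt (abs_clampTo_sub_le M a b) hab)
  rw [Real.dist_eq] at this
  exact le_of_lt this

lemma clampTo_bdd {M : ℝ} (hM : 0 ≤ M) {c : ℝ → ℝ} (hc : Continuous c) :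
    ∃ C : ℝ, ∀ z : ℝ, |c (clampTo M z)| ≤ C := by
  obtain ⟨C, hC⟩ := (isCompact_Icc (a := (0:ℝ)) (b := M)).exists_bound_of_continuousOn
    hc.continuousOn
  exact ⟨C, fun z => hC _ (clampTo_mem_Icc hM z)⟩

end Clamp

section Aux5

set_option linter.unusedSectionVars false

variable {E T N : Type*} [Fintype E] [Fintype N]
variable {strat : T → Finset (Finset E)} {tm : N → T} {σ : N → Finset E → ℝ} {w : N → ℝ}

lemma expVal_dist_le (hmix : IsMixed strat tm σ) {g h : (N → Finset E) → ℝ} {B : ℝ}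
    (H : ∀ a, |g a - h a| ≤ B) : |expVal σ g - expVal σ h| ≤ B := by
  rw [← expVal_sub]
  exact expVal_abs_le hmix H

lemma expVal_flowW_eq (hmix : IsMixed strat tm σ) (t : T) (s : Finset E) :
    expVal σ (flowW w tm t s) = ∑ i, (if tm i = t then σ i s * w i else 0) := by
  have h : expVal σ (flowW w tm t s)
      = ∑ i, expVal σ (fun a => if tm i = t ∧ a i = s then w i else 0) := by
    rw [← expVal_sum]
    rfl
  rw [h]
  refine Finset.sum_congr rfl fun i _ => ?_
  rw [expVal_apply hmix i (fun s' => if tm i = t ∧ s' = s then w i else 0)]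
  rw [Finset.sum_eq_single s]
  · by_cases h2 : tm i = t <;> simp [h2]
  · intro s' _ hne
    rw [if_neg (by tauto), mul_zero]
  · intro h; exact absurd (Finset.mem_univ s) h

end Aux5
section Aux6

set_option linter.unusedSectionVars false

variable {E T N : Type*} [Fintype E] [Fintype N]
variable {strat : T → Finset (Finset E)} {tm : N → T} {σ : N → Finset E → ℝ}

lemma abs_expVal_le (hmix : IsMixed strat tm σ) (g : (N → Finset E) → ℝ) :
    |expVal σ g| ≤ expVal σ (fun a => |g a|) := by
  rw [abs_le]
  constructor
  · have h1 := expVal_mono hmix (g := fun a => -|g a|) (h := g) (fun a => neg_abs_le _)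
    have h2 : expVal σ (fun a => -|g a|) = - expVal σ (fun a => |g a|) := by
      have h3 := expVal_sub (σ := σ) (fun _ => (0:ℝ)) (fun a => |g a|)
      simp only [zero_sub] at h3
      rw [h3, expVal_const hmix]
      ring
    linarith
  · exact expVal_mono hmix fun a => le_abs_self _

lemma expVal_const_mul (r : ℝ) (g : (N → Finset E) → ℝ) :
    expVal σ (fun a => r * g a) = r * expVal σ g := by
  unfold expVal
  rw [Finset.mul_sum]
  exact Finset.sum_congr rfl fun a _ => by ring

lemma exists_pos_min {ι : Type*} [Fintype ι] (δf : ι → ℝ) (h : ∀ i, 0 < δf i) :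
    ∃ δ > (0:ℝ), ∀ i, δ ≤ δf i := by
  classical
  by_cases hne : Nonempty ι
  · refine ⟨Finset.univ.inf' (Finset.univ_nonempty) δf, ?_, fun i => Finset.inf'_le _ (Finset.mem_univ i)⟩
    rw [gt_iff_lt, Finset.lt_inf'_iff]
    exact fun i _ => h i
  · exact ⟨1, one_pos, fun i => absurd ⟨i⟩ hne⟩

lemma exists_uc_all {M : ℝ} (hM : 0 ≤ M) (c : E → ℝ → ℝ) (hc : ∀ e, Continuous (c e)) :
    ∀ ε > (0:ℝ), ∃ δ > (0:ℝ), ∀ (e : E) (a b : ℝ), |a - b| < δ →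
      |c e (clampTo M a) - c e (clampTo M b)| ≤ ε := by
  intro ε hε
  have h := fun e => clampTo_uc hM (hc e) ε hε
  choose δf hδf0 hδf using h
  obtain ⟨δ, hδ0, hδle⟩ := exists_pos_min δf hδf0
  exact ⟨δ, hδ0, fun e a b hab => hδf e a b (lt_of_lt_of_le hab (hδle e))⟩

end Aux6

set_option maxHeartbeats 1000000 in

/-- Convergence of weighted congestion games: for a sequence of games with the number of
players tending to infinity, maximal weight tending to zero, and per-type aggregate demands
converging to `d`, and for any sequence of mixed Nash equilibria, the expected flow-load pairs
are bounded; every accumulation point (subsequential limit) is a Wardrop equilibrium of the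
nonatomic limit game; and along any convergent subsequence the random flow-load pairs converge
in distribution to the (constant) limit pair. -/
theorem stmt12 {E T : Type*} [Fintype E] [Fintype T]
    (strat : T → Finset (Finset E)) (hstrat : ∀ t, (strat t).Nonempty)
    (c : E → ℝ → ℝ) (hc : ∀ e, Continuous (c e)) (hmono : ∀ e, Monotone (c e))
    (P : ℕ → Type) [∀ n, Fintype (P n)]
    (w : ∀ n, P n → ℝ) (hw : ∀ n i, 0 ≤ w n i)
    (tm : ∀ n, P n → T) (d : T → ℝ)
    (hcard : Tendsto (fun n => (Fintype.card (P n) : ℝ)) atTop atTop)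
    (hwmax : ∀ ε > (0 : ℝ), ∀ᶠ n in atTop, ∀ i : P n, w n i < ε)
    (hdem : ∀ t, Tendsto (fun n => ∑ i : P n, if tm n i = t then w n i else 0)
      atTop (nhds (d t)))
    (σ : ∀ n, P n → Finset E → ℝ) (hNE : ∀ n, IsMNE strat c (w n) (tm n) (σ n)) :
    (∃ M : ℝ, ∀ n t s e,
      |expVal (σ n) (flowW (w n) (tm n) t s)| ≤ M ∧ |expVal (σ n) (loadW (w n) e)| ≤ M) ∧
    ∀ (φ : ℕ → ℕ), StrictMono φ →
      ∀ (yhat : T → Finset E → ℝ) (xhat : E → ℝ),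
      (∀ t s, Tendsto (fun k => expVal (σ (φ k)) (flowW (w (φ k)) (tm (φ k)) t s))
        atTop (nhds (yhat t s))) →
      (∀ e, Tendsto (fun k => expVal (σ (φ k)) (loadW (w (φ k)) e))
        atTop (nhds (xhat e))) →
      IsWE strat c d yhat xhat ∧
      ∀ f : ((T × Finset E → ℝ) × (E → ℝ)) → ℝ, Continuous f → (∃ M, ∀ z, |f z| ≤ M) →
        Tendsto (fun k => expVal (σ (φ k)) (fun a =>
            f (fun p => flowW (w (φ k)) (tm (φ k)) p.1 p.2 a,
               fun e => loadW (w (φ k)) e a)))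
          atTop (nhds (f (fun p => yhat p.1 p.2, xhat))) := by
  classical
  have hmixn : ∀ n, IsMixed strat (tm n) (σ n) := fun n => (hNE n).1
  set Wn : ℕ → ℝ := fun n => ∑ i, w n i with hWnDef
  have hWnconv : Tendsto Wn atTop (nhds (∑ t, d t)) := by
    have heq : Wn = fun n => ∑ t, ∑ i, (if tm n i = t then w n i else 0) := by
      funext n
      rw [Finset.sum_comm]
      refine Finset.sum_congr rfl fun i _ => ?_
      simp
    rw [heq]
    exact tendsto_finset_sum _ (fun t _ => hdem t)
  obtain ⟨M0, hM0⟩ := hWnconv.bddAbove_range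
  set M : ℝ := max M0 1 with hMdef
  have hM1 : (1:ℝ) ≤ M := le_max_right _ _
  have hMpos : (0:ℝ) < M := by linarith
  have hWM : ∀ n, Wn n ≤ M :=
    fun n => le_trans (hM0 (Set.mem_range_self n)) (le_max_left _ _)
  have hflow_bd : ∀ (n : ℕ) (t : T) (s : Finset E) (a : P n → Finset E), |flowW (w n) (tm n) t s a| ≤ M := by
    intro n t s a
    rw [abs_le]
    constructor
    · linarith [flowW_nonneg (hw n) (tm := tm n) t s a]
    · exact le_trans (flowW_le (hw n) t s a) (hWM n)
  have hload_bd : ∀ (n : ℕ) (e : E) (a : P n → Finset E), |loadW (w n) e a| ≤ M := by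
    intro n e a
    rw [abs_le]
    constructor
    · linarith [loadW_nonneg (hw n) e a]
    · exact le_trans (loadW_le (hw n) e a) (hWM n)
  refine ⟨⟨M, ?_⟩, ?_⟩
  · intro n t s e
    exact ⟨expVal_abs_le (hmixn n) (hflow_bd n t s), expVal_abs_le (hmixn n) (hload_bd n e)⟩
  intro φ hφ yhat xhat hyconv hxconv
  have hφt : Tendsto φ atTop atTop := hφ.tendsto_atTop
  -- limit bounds
  have hy0 : ∀ t s, 0 ≤ yhat t s := fun t s =>
    ge_of_tendsto' (hyconv t s)
      (fun k => expVal_nonneg (hmixn _) (fun a => flowW_nonneg (hw _) t s a))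
  have hx0 : ∀ e, 0 ≤ xhat e := fun e =>
    ge_of_tendsto' (hxconv e)
      (fun k => expVal_nonneg (hmixn _) (fun a => loadW_nonneg (hw _) e a))
  have hxM : ∀ e, xhat e ≤ M := fun e =>
    le_of_tendsto' (hxconv e) (fun k => le_trans (le_abs_self _)
      (expVal_abs_le (hmixn _) (hload_bd (φ k) e)))
  -- feasibility pieces
  have hyz : ∀ t s, s ∉ strat t → yhat t s = 0 := by
    intro t s hs
    have h1 : (fun k => expVal (σ (φ k)) (flowW (w (φ k)) (tm (φ k)) t s))
        = fun _ => (0:ℝ) := funext fun k => expVal_flow_zero (hmixn _) hs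
    have h2 := hyconv t s
    rw [h1] at h2
    exact tendsto_nhds_unique h2 tendsto_const_nhds
  have hd : ∀ t, d t = ∑ s ∈ strat t, yhat t s := by
    intro t
    have h1 : Tendsto (fun k => ∑ s ∈ strat t,
        expVal (σ (φ k)) (flowW (w (φ k)) (tm (φ k)) t s)) atTop
        (nhds (∑ s ∈ strat t, yhat t s)) :=
      tendsto_finset_sum _ (fun s _ => hyconv t s)
    have h2 : (fun k => ∑ s ∈ strat t, expVal (σ (φ k)) (flowW (w (φ k)) (tm (φ k)) t s))
        = fun k => ∑ i, (if tm (φ k) i = t then w (φ k) i else 0) :=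
      funext fun k => expVal_sum_flow (hmixn _) t
    rw [h2] at h1
    exact tendsto_nhds_unique ((hdem t).comp hφt) h1
  have hxeq : ∀ e, xhat e = ∑ t, ∑ s ∈ strat t, (if e ∈ s then yhat t s else 0) := by
    intro e
    have h1 : (fun k => expVal (σ (φ k)) (loadW (w (φ k)) e))
        = fun k => ∑ t, ∑ s ∈ strat t,
            (if e ∈ s then expVal (σ (φ k)) (flowW (w (φ k)) (tm (φ k)) t s) else 0) :=
      funext fun k => expVal_load_eq_flow (hmixn _) e
    have h2 := hxconv e
    rw [h1] at h2
    have h3 : Tendsto (fun k => ∑ t, ∑ s ∈ strat t,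
        (if e ∈ s then expVal (σ (φ k)) (flowW (w (φ k)) (tm (φ k)) t s) else 0)) atTop
        (nhds (∑ t, ∑ s ∈ strat t, (if e ∈ s then yhat t s else 0))) := by
      refine tendsto_finset_sum _ fun t _ => tendsto_finset_sum _ fun s _ => ?_
      by_cases h : e ∈ s
      · simp only [if_pos h]
        exact hyconv t s
      · simp only [if_neg h]
        exact tendsto_const_nhds
    exact tendsto_nhds_unique h2 h3
  -- clamped cost functions
  set cB : E → ℝ → ℝ := fun e z => c e (clampTo M z) with hcBdef
  have hcBcont : ∀ e, Continuous (cB e) := fun e =>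
    (hc e).comp (continuous_const.max (continuous_id.min continuous_const))
  obtain ⟨C0, hC0⟩ : ∃ C0 : E → ℝ, ∀ e z, |cB e z| ≤ C0 e := by
    have h := fun e => clampTo_bdd hMpos.le (hc e)
    choose C0 hC0 using h
    exact ⟨C0, hC0⟩
  set C : ℝ := 1 + ∑ e, |C0 e| with hCdef
  have hCpos : (0:ℝ) < C := by
    have : (0:ℝ) ≤ ∑ e, |C0 e| := Finset.sum_nonneg fun e _ => abs_nonneg _
    linarith
  have hCb : ∀ e z, |cB e z| ≤ C := by
    intro e z
    calc |cB e z| ≤ C0 e := hC0 e z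
      _ ≤ |C0 e| := le_abs_self _
      _ ≤ ∑ e', |C0 e'| := Finset.single_le_sum (f := fun e' => |C0 e'|) (fun e' _ => abs_nonneg _) (Finset.mem_univ e)
      _ ≤ C := by linarith
  -- master estimate A
  have masterA : ∀ ε' > (0:ℝ), ∀ᶠ k in atTop, ∀ (i : P (φ k)) (e : E),
      |expVal (σ (φ k)) (fun a => c e (loadWi (w (φ k)) i e a))
        - cB e (expVal (σ (φ k)) (loadW (w (φ k)) e))| ≤ 2 * ε' := by
    intro ε' hε'
    obtain ⟨δ, hδ0, hδ⟩ := exists_uc_all hMpos.le c hc (ε'/2) (by linarith)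
    set η : ℝ := min δ ((ε'/2) * δ^2 / (2*C*M + 1)) with hηdef
    have hη0 : 0 < η := lt_min hδ0 (by positivity)
    filter_upwards [hφt.eventually (hwmax η hη0)] with k hk
    intro i e
    have hwk : ∀ j, w (φ k) j < η := hk
    have hstep1 : expVal (σ (φ k)) (fun a => c e (loadWi (w (φ k)) i e a))
        = expVal (σ (φ k)) (fun a => cB e (loadWi (w (φ k)) i e a)) := by
      refine congrArg _ (funext fun a => ?_)
      rw [hcBdef]
      simp only []
      rw [clampTo_eq_self (loadWi_nonneg (hw _) i e a)
        (le_trans (loadWi_le (hw _) i e a) (hWM (φ k)))]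
    have hstep2 : |expVal (σ (φ k)) (fun a => cB e (loadWi (w (φ k)) i e a))
        - expVal (σ (φ k)) (fun a => cB e (loadW (w (φ k)) e a))| ≤ ε'/2 := by
      refine expVal_dist_le (hmixn _) fun a => ?_
      refine hδ e _ _ ?_
      calc |loadWi (w (φ k)) i e a - loadW (w (φ k)) e a| ≤ w (φ k) i :=
            abs_loadWi_sub_loadW (hw _) i e a
        _ < η := hwk i
        _ ≤ δ := min_le_left _ _
    have hvar : expVal (σ (φ k)) (fun a =>
        (loadW (w (φ k)) e a - expVal (σ (φ k)) (loadW (w (φ k)) e))^2) ≤ η * M :=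
      le_trans (var_loadW (hmixn _) (hw _) e)
        (le_trans (sum_sq_le_of_lt (hw _) hwk)
          (mul_le_mul_of_nonneg_left (hWM (φ k)) hη0.le))
    have hstep3 := expVal_comp_close (hmixn (φ k)) (loadW (w (φ k)) e) (cB e)
      hδ0 (hCb e) (fun z1 z2 h => hδ e z1 z2 h) hvar
    have hsmall : 2*C*(η*M)/δ^2 ≤ ε'/2 := by
      have hηle : η ≤ (ε'/2) * δ^2 / (2*C*M + 1) := min_le_right _ _
      rw [div_le_iff₀ (by positivity)]
      calc 2*C*(η*M) ≤ (2*C*M+1) * η := by nlinarith [hη0.le, hCpos.le, hMpos.le]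
        _ ≤ (2*C*M+1) * ((ε'/2) * δ^2 / (2*C*M + 1)) :=
            mul_le_mul_of_nonneg_left hηle (by positivity)
        _ = (ε'/2) * δ^2 := by field_simp
    have hstep3' : |expVal (σ (φ k)) (fun a => cB e (loadW (w (φ k)) e a))
        - cB e (expVal (σ (φ k)) (loadW (w (φ k)) e))| ≤ ε' := by
      calc |expVal (σ (φ k)) (fun a => cB e (loadW (w (φ k)) e a))
          - cB e (expVal (σ (φ k)) (loadW (w (φ k)) e))| ≤ ε'/2 + 2*C*(η*M)/δ^2 := hstep3
        _ ≤ ε' := by linarith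
    rw [hstep1]
    calc |expVal (σ (φ k)) (fun a => cB e (loadWi (w (φ k)) i e a))
        - cB e (expVal (σ (φ k)) (loadW (w (φ k)) e))|
        ≤ |expVal (σ (φ k)) (fun a => cB e (loadWi (w (φ k)) i e a))
            - expVal (σ (φ k)) (fun a => cB e (loadW (w (φ k)) e a))|
          + |expVal (σ (φ k)) (fun a => cB e (loadW (w (φ k)) e a))
            - cB e (expVal (σ (φ k)) (loadW (w (φ k)) e))| := abs_sub_le _ _ _
      _ ≤ 2 * ε' := by linarith
  -- master estimate B
  have masterB : ∀ ε' > (0:ℝ), ∀ᶠ k in atTop, ∀ e : E,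
      |cB e (expVal (σ (φ k)) (loadW (w (φ k)) e)) - cB e (xhat e)| ≤ ε' := by
    intro ε' hε'
    rw [eventually_all]
    intro e
    have htend : Tendsto (fun k => cB e (expVal (σ (φ k)) (loadW (w (φ k)) e))) atTop
        (nhds (cB e (xhat e))) := ((hcBcont e).continuousAt.tendsto).comp (hxconv e)
    have h2 := Metric.tendsto_nhds.mp htend ε' hε'
    filter_upwards [h2] with k hk
    rw [Real.dist_eq] at hk
    exact hk.le
  constructor
  · -- Wardrop equilibrium
    refine ⟨⟨hy0, hyz, hd, hxeq⟩, ?_⟩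
    intro t s hs s' hs' hpos
    have hcx : ∀ u : Finset E, ∑ e ∈ u, c e (xhat e) = ∑ e ∈ u, cB e (xhat e) := by
      refine fun u => Finset.sum_congr rfl fun e _ => ?_
      rw [hcBdef]
      simp only []
      rw [clampTo_eq_self (hx0 e) (hxM e)]
    refine le_of_forall_pos_le_add fun ε hε => ?_
    set q : ℝ := (Fintype.card E : ℝ) with hqdef
    have hq0 : (0:ℝ) ≤ q := Nat.cast_nonneg _
    set ε1 : ℝ := ε / (6 * (q + 1)) with hε1def
    have hε10 : 0 < ε1 := by positivity
    have hev3 : ∀ᶠ k in atTop,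
        yhat t s / 2 < expVal (σ (φ k)) (flowW (w (φ k)) (tm (φ k)) t s) :=
      (hyconv t s).eventually (eventually_gt_nhds (by linarith))
    obtain ⟨k, hA, hB, hY⟩ := ((masterA ε1 hε10).and ((masterB ε1 hε10).and hev3)).exists
    have hflow := expVal_flowW_eq (hmixn (φ k)) (w := w (φ k)) t s
    have hpos' : 0 < expVal (σ (φ k)) (flowW (w (φ k)) (tm (φ k)) t s) := by linarith
    have hex : ∃ i, 0 < (if tm (φ k) i = t then σ (φ k) i s * w (φ k) i else 0) := by
      by_contra hcon
      push_neg at hcon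
      have hle : expVal (σ (φ k)) (flowW (w (φ k)) (tm (φ k)) t s) ≤ 0 := by
        rw [hflow]
        exact Finset.sum_nonpos fun i _ => hcon i
      linarith
    obtain ⟨i, hi⟩ := hex
    have hit : tm (φ k) i = t := by
      by_contra hcon
      rw [if_neg hcon] at hi
      exact lt_irrefl 0 hi
    rw [if_pos hit] at hi
    have hσpos : 0 < σ (φ k) i s := by nlinarith [hw (φ k) i]
    have hNEi := (hNE (φ k)).2 i s (by rw [hit]; exact hs) s' (by rw [hit]; exact hs') hσpos
    have hsplit : ∀ u : Finset E,
        expVal (σ (φ k)) (fun a => ∑ e ∈ u, c e (loadWi (w (φ k)) i e a))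
          = ∑ e ∈ u, expVal (σ (φ k)) (fun a => c e (loadWi (w (φ k)) i e a)) :=
      fun u => expVal_sum u _
    have hbound : ∀ u : Finset E, |∑ e ∈ u, cB e (xhat e)
        - expVal (σ (φ k)) (fun a => ∑ e ∈ u, c e (loadWi (w (φ k)) i e a))|
          ≤ 3 * ε1 * u.card := by
      intro u
      rw [hsplit u, ← Finset.sum_sub_distrib]
      calc |∑ e ∈ u, (cB e (xhat e)
            - expVal (σ (φ k)) (fun a => c e (loadWi (w (φ k)) i e a)))|
          ≤ ∑ e ∈ u, |cB e (xhat e)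
            - expVal (σ (φ k)) (fun a => c e (loadWi (w (φ k)) i e a))| :=
            Finset.abs_sum_le_sum_abs _ _
        _ ≤ ∑ _e ∈ u, 3 * ε1 := by
            refine Finset.sum_le_sum fun e _ => ?_
            have h1 := hA i e
            have h2 := hB e
            have h3 := abs_sub_le (cB e (xhat e))
              (cB e (expVal (σ (φ k)) (loadW (w (φ k)) e)))
              (expVal (σ (φ k)) (fun a => c e (loadWi (w (φ k)) i e a)))
            rw [abs_sub_comm] at h1 h2
            linarith
        _ = 3 * ε1 * u.card := by
            rw [Finset.sum_const, nsmul_eq_mul]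
            ring
    have hcardle : ∀ u : Finset E, (u.card:ℝ) ≤ q := fun u => by
      rw [hqdef]
      exact_mod_cast Finset.card_le_univ u
    have hs1 := abs_le.mp (hbound s)
    have hs2 := abs_le.mp (hbound s')
    have hεtot : 3 * ε1 * (s.card:ℝ) + 3 * ε1 * (s'.card:ℝ) ≤ ε := by
      have h1 : 3 * ε1 * (s.card:ℝ) ≤ 3 * ε1 * q :=
        mul_le_mul_of_nonneg_left (hcardle s) (by positivity)
      have h2 : 3 * ε1 * (s'.card:ℝ) ≤ 3 * ε1 * q :=
        mul_le_mul_of_nonneg_left (hcardle s') (by positivity)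
      have h3 : 6 * ε1 * q ≤ ε := by
        have heq : ε1 * (6 * (q + 1)) = ε := by
          rw [hε1def]
          field_simp
        nlinarith [hε10.le]
      linarith
    rw [hcx s, hcx s']
    linarith [hs1.2, hs2.1, hNEi, hεtot]
  · -- convergence in distribution
    intro f hf hfb
    obtain ⟨Cf, hCf⟩ := hfb
    have hCf0 : (0:ℝ) ≤ Cf := le_trans (abs_nonneg _) (hCf (fun _ => 0, fun _ => 0))
    set μ : (T × Finset E → ℝ) × (E → ℝ) := (fun p => yhat p.1 p.2, xhat) with hμdef
    rw [Metric.tendsto_nhds]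
    intro ε hε
    obtain ⟨δ, hδ0, hδ⟩ := Metric.continuousAt_iff.mp (hf.continuousAt (x := μ)) (ε/4)
      (by positivity)
    set K : ℝ := (Fintype.card (T × Finset E) : ℝ) + (Fintype.card E : ℝ) with hKdef
    have hK0 : (0:ℝ) ≤ K := by positivity
    set η : ℝ := (ε/4) * δ^2 / (8 * (Cf+1) * (K+1) * M) with hηdef
    have hη0 : 0 < η := by positivity
    have hevw : ∀ᶠ k in atTop, ∀ i : P (φ k), w (φ k) i < η := hφt.eventually (hwmax η hη0)
    have hevY : ∀ᶠ k in atTop, ∀ p : T × Finset E,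
        |expVal (σ (φ k)) (flowW (w (φ k)) (tm (φ k)) p.1 p.2) - yhat p.1 p.2| < δ/2 := by
      rw [eventually_all]
      intro p
      filter_upwards [Metric.tendsto_nhds.mp (hyconv p.1 p.2) (δ/2) (by positivity)] with k hk
      rwa [Real.dist_eq] at hk
    have hevX : ∀ᶠ k in atTop, ∀ e : E,
        |expVal (σ (φ k)) (loadW (w (φ k)) e) - xhat e| < δ/2 := by
      rw [eventually_all]
      intro e
      filter_upwards [Metric.tendsto_nhds.mp (hxconv e) (δ/2) (by positivity)] with k hk
      rwa [Real.dist_eq] at hk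
    filter_upwards [hevw, hevY, hevX] with k hkw hkY hkX
    rw [Real.dist_eq]
    set Z : (P (φ k) → Finset E) → ((T × Finset E → ℝ) × (E → ℝ)) := fun a =>
      (fun p => flowW (w (φ k)) (tm (φ k)) p.1 p.2 a, fun e => loadW (w (φ k)) e a)
      with hZdef
    show |expVal (σ (φ k)) (fun a => f (Z a)) - f μ| < ε
    set S : (P (φ k) → Finset E) → ℝ := fun a =>
      (∑ p : T × Finset E, (flowW (w (φ k)) (tm (φ k)) p.1 p.2 a
          - expVal (σ (φ k)) (flowW (w (φ k)) (tm (φ k)) p.1 p.2))^2)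
        + ∑ e : E, (loadW (w (φ k)) e a - expVal (σ (φ k)) (loadW (w (φ k)) e))^2
      with hSdef
    have hS0 : ∀ a, 0 ≤ S a := fun a =>
      add_nonneg (Finset.sum_nonneg fun _ _ => sq_nonneg _)
        (Finset.sum_nonneg fun _ _ => sq_nonneg _)
    have hptw : ∀ a, |f (Z a) - f μ| ≤ ε/4 + (8*Cf/δ^2) * S a := by
      intro a
      by_cases hgood : dist (Z a) μ < δ
      · have h1 := hδ hgood
        rw [Real.dist_eq] at h1
        have h2 : 0 ≤ (8*Cf/δ^2) * S a := mul_nonneg (by positivity) (hS0 a)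
        linarith [h1.le]
      · push_neg at hgood
        have hbad : δ^2/4 ≤ S a := by
          have hmax : ¬ (dist (Z a).1 μ.1 < δ ∧ dist (Z a).2 μ.2 < δ) := by
            rintro ⟨ha1, ha2⟩
            exact absurd (by rw [Prod.dist_eq]; exact max_lt ha1 ha2) (not_lt.mpr hgood)
          have hsq : ∀ x : ℝ, δ/2 ≤ |x| → δ^2/4 ≤ x^2 := by
            intro x hx
            have h1 : (δ/2)*(δ/2) ≤ |x| * |x| := mul_self_le_mul_self (by linarith) hx
            nlinarith [sq_abs x]
          rcases not_and_or.mp hmax with h | h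
          · have hall : ¬ ∀ p, dist ((Z a).1 p) (μ.1 p) < δ :=
              fun hall => h ((dist_pi_lt_iff hδ0).mpr hall)
            push_neg at hall
            obtain ⟨p, hp⟩ := hall
            rw [Real.dist_eq] at hp
            have hdev : δ/2 ≤ |flowW (w (φ k)) (tm (φ k)) p.1 p.2 a
                - expVal (σ (φ k)) (flowW (w (φ k)) (tm (φ k)) p.1 p.2)| := by
              have h2 := hkY p
              have h3 := abs_sub_le (flowW (w (φ k)) (tm (φ k)) p.1 p.2 a)
                (expVal (σ (φ k)) (flowW (w (φ k)) (tm (φ k)) p.1 p.2)) (yhat p.1 p.2)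
              have hp' : δ ≤ |flowW (w (φ k)) (tm (φ k)) p.1 p.2 a - yhat p.1 p.2| := hp
              linarith
            refine le_trans (hsq _ hdev) ?_
            refine le_trans (Finset.single_le_sum
              (f := fun p : T × Finset E => (flowW (w (φ k)) (tm (φ k)) p.1 p.2 a
                - expVal (σ (φ k)) (flowW (w (φ k)) (tm (φ k)) p.1 p.2))^2)
              (fun _ _ => sq_nonneg _) (Finset.mem_univ p)) ?_
            exact le_add_of_nonneg_right (Finset.sum_nonneg fun _ _ => sq_nonneg _)
          · have hall : ¬ ∀ e, dist ((Z a).2 e) (μ.2 e) < δ :=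
              fun hall => h ((dist_pi_lt_iff hδ0).mpr hall)
            push_neg at hall
            obtain ⟨e, hp⟩ := hall
            rw [Real.dist_eq] at hp
            have hdev : δ/2 ≤ |loadW (w (φ k)) e a - expVal (σ (φ k)) (loadW (w (φ k)) e)| := by
              have h2 := hkX e
              have h3 := abs_sub_le (loadW (w (φ k)) e a)
                (expVal (σ (φ k)) (loadW (w (φ k)) e)) (xhat e)
              have hp' : δ ≤ |loadW (w (φ k)) e a - xhat e| := hp
              linarith
            refine le_trans (hsq _ hdev) ?_
            refine le_trans (Finset.single_le_sum
              (f := fun e : E => (loadW (w (φ k)) e a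
                - expVal (σ (φ k)) (loadW (w (φ k)) e))^2)
              (fun _ _ => sq_nonneg _) (Finset.mem_univ e)) ?_
            exact le_add_of_nonneg_left (Finset.sum_nonneg fun _ _ => sq_nonneg _)
        have h2Cf : |f (Z a) - f μ| ≤ 2*Cf := by
          calc |f (Z a) - f μ| ≤ |f (Z a)| + |f μ| := abs_sub _ _
            _ ≤ 2*Cf := by linarith [hCf (Z a), hCf μ]
        have h3 : 2*Cf ≤ (8*Cf/δ^2) * S a := by
          calc 2*Cf = (8*Cf/δ^2) * (δ^2/4) := by
                field_simp
                ring
            _ ≤ (8*Cf/δ^2) * S a :=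
                mul_le_mul_of_nonneg_left hbad (by positivity)
        have hε4 : (0:ℝ) ≤ ε/4 := by positivity
        linarith
    have hES : expVal (σ (φ k)) S ≤ K * (η * M) := by
      have hvarle : ∀ (g : (P (φ k) → Finset E) → ℝ),
          (expVal (σ (φ k)) (fun a => (g a - expVal (σ (φ k)) g)^2) ≤ ∑ i, (w (φ k) i)^2) →
          expVal (σ (φ k)) (fun a => (g a - expVal (σ (φ k)) g)^2) ≤ η * M := by
        intro g hg
        refine le_trans hg (le_trans (sum_sq_le_of_lt (hw _) hkw) ?_)
        exact mul_le_mul_of_nonneg_left (hWM (φ k)) hη0.le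
      have h1 : expVal (σ (φ k)) S
          = (∑ p : T × Finset E, expVal (σ (φ k)) (fun a =>
              (flowW (w (φ k)) (tm (φ k)) p.1 p.2 a
                - expVal (σ (φ k)) (flowW (w (φ k)) (tm (φ k)) p.1 p.2))^2))
            + ∑ e : E, expVal (σ (φ k)) (fun a =>
              (loadW (w (φ k)) e a - expVal (σ (φ k)) (loadW (w (φ k)) e))^2) := by
        rw [hSdef]
        rw [expVal_add (fun a => ∑ p : T × Finset E, (flowW (w (φ k)) (tm (φ k)) p.1 p.2 a
            - expVal (σ (φ k)) (flowW (w (φ k)) (tm (φ k)) p.1 p.2))^2)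
          (fun a => ∑ e : E, (loadW (w (φ k)) e a
            - expVal (σ (φ k)) (loadW (w (φ k)) e))^2)]
        rw [expVal_sum Finset.univ, expVal_sum Finset.univ]
      rw [h1]
      have h2 : ∀ p : T × Finset E, expVal (σ (φ k)) (fun a =>
          (flowW (w (φ k)) (tm (φ k)) p.1 p.2 a
            - expVal (σ (φ k)) (flowW (w (φ k)) (tm (φ k)) p.1 p.2))^2) ≤ η * M :=
        fun p => hvarle _ (var_flowW (hmixn _) (hw _) p.1 p.2)
      have h3 : ∀ e : E, expVal (σ (φ k)) (fun a =>
          (loadW (w (φ k)) e a - expVal (σ (φ k)) (loadW (w (φ k)) e))^2) ≤ η * M :=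
        fun e => hvarle _ (var_loadW (hmixn _) (hw _) e)
      calc (∑ p : T × Finset E, expVal (σ (φ k)) (fun a =>
              (flowW (w (φ k)) (tm (φ k)) p.1 p.2 a
                - expVal (σ (φ k)) (flowW (w (φ k)) (tm (φ k)) p.1 p.2))^2))
            + ∑ e : E, expVal (σ (φ k)) (fun a =>
              (loadW (w (φ k)) e a - expVal (σ (φ k)) (loadW (w (φ k)) e))^2)
          ≤ (∑ _p : T × Finset E, η * M) + ∑ _e : E, η * M :=
            add_le_add (Finset.sum_le_sum fun p _ => h2 p) (Finset.sum_le_sum fun e _ => h3 e)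
        _ = K * (η * M) := by
            rw [Finset.sum_const, Finset.sum_const, nsmul_eq_mul, nsmul_eq_mul,
              Finset.card_univ, Finset.card_univ, hKdef]
            ring
    have hfinal : |expVal (σ (φ k)) (fun a => f (Z a)) - f μ|
        ≤ ε/4 + (8*Cf/δ^2) * (K * (η * M)) := by
      have h0 : expVal (σ (φ k)) (fun a => f (Z a)) - f μ
          = expVal (σ (φ k)) (fun a => f (Z a) - f μ) := by
        rw [expVal_sub, expVal_const (hmixn _)]
      rw [h0]
      calc |expVal (σ (φ k)) (fun a => f (Z a) - f μ)|
          ≤ expVal (σ (φ k)) (fun a => |f (Z a) - f μ|) := abs_expVal_le (hmixn _) _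
        _ ≤ expVal (σ (φ k)) (fun a => ε/4 + (8*Cf/δ^2) * S a) := expVal_mono (hmixn _) hptw
        _ = ε/4 + (8*Cf/δ^2) * expVal (σ (φ k)) S := by
            rw [expVal_add (fun _ => ε/4) (fun a => (8*Cf/δ^2) * S a), expVal_const (hmixn _),
              expVal_const_mul]
        _ ≤ ε/4 + (8*Cf/δ^2) * (K * (η * M)) := by
            have hc0 : (0:ℝ) ≤ 8*Cf/δ^2 := by positivity
            exact add_le_add_right (mul_le_mul_of_nonneg_left hES hc0) _
    have hlast : (8*Cf/δ^2) * (K * (η * M)) ≤ ε/4 := by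
      have heq : η * (8 * (Cf+1) * (K+1) * M) = (ε/4) * δ^2 := by
        rw [hηdef]
        field_simp
      have hrw : (8*Cf/δ^2) * (K * (η * M)) = 8*Cf*(K*(η*M))/δ^2 := by ring
      rw [hrw, div_le_iff₀ (by positivity)]
      have hηM : (0:ℝ) ≤ η * M := mul_nonneg hη0.le hMpos.le
      have hcoef : 8*Cf*K ≤ 8*(Cf+1)*(K+1) := by nlinarith
      calc 8*Cf*(K*(η*M)) = (8*Cf*K)*(η*M) := by ring
        _ ≤ (8*(Cf+1)*(K+1))*(η*M) := mul_le_mul_of_nonneg_right hcoef hηM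
        _ = η * (8*(Cf+1)*(K+1)*M) := by ring
        _ = ε/4*δ^2 := heq
    linarith [hfinal, hlast, hε]
end
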